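/- arXiv:1902.06073 — 5 statements merged into one kernel-verified Lean document; each statement's English description precedes it below -/
import Mathlib

section
/- For any s, t ∈ ℂ and any natural number k, there exists a unique polynomial q_k^{s,t}(ξ,η) in two variables, homogeneous of degree k, such that (∂/∂ξ - ∂/∂η)^k (ξ^{s+k} η^{t+k}) = ξ^s η^t · q_k^{s,t}(ξ,η), where the identity holds as functions on the open set {ξ > 0, η > 0}. -/
open MvPolynomial Complex

/-- The operator ∂/∂ξ - ∂/∂η acting on functions of two real variables. -/
noncomputable def Dop (f : ℝ → ℝ → ℂ) : ℝ → ℝ → ℂ :=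
  fun x y => deriv (fun u => f u y) x - deriv (fun v => f x v) y

-- X i * pderiv i P is homogeneous of the same degree
lemma X_mul_pderiv_homog {P : MvPolynomial (Fin 2) ℂ} {n : ℕ} (hP : P.IsHomogeneous n)
    (i : Fin 2) : (X i * pderiv i P).IsHomogeneous n := by
  rw [P.as_sum, map_sum, Finset.mul_sum]
  apply IsHomogeneous.sum
  intro d hd
  rw [pderiv_monomial]
  rcases Nat.eq_zero_or_pos (d i) with h0 | hpos
  · rw [h0]
    simp only [Nat.cast_zero, mul_zero, monomial_zero, mul_zero]
    exact isHomogeneous_zero _ _ _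
  · rw [X, monomial_mul, one_mul]
    apply isHomogeneous_monomial
    have hle : Finsupp.single i 1 ≤ d := by
      rw [Finsupp.single_le_iff]; exact hpos
    have : Finsupp.single i 1 + (d - Finsupp.single i 1) = d := add_tsub_cancel_of_le hle
    rw [this]
    have := hP (mem_support_iff.1 hd)
    rw [Finsupp.degree_eq_weight_one]; exact this

lemma hasDerivAt_eval0 (P : MvPolynomial (Fin 2) ℂ) (b z : ℂ) :
    HasDerivAt (fun a : ℂ => eval ![a, b] P) (eval ![z, b] (pderiv 0 P)) z := by
  induction P using MvPolynomial.induction_on with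
  | C a => simpa using hasDerivAt_const z a
  | add p q hp hq => simpa [Pi.add_def] using hp.add hq
  | mul_X p i hp =>
    fin_cases i
    · have := hp.mul (hasDerivAt_id z)
      simp only [pderiv_mul, pderiv_X_self, map_add, map_mul, eval_X, Pi.mul_def] at *
      exact this.congr_deriv (by simp [Matrix.cons_val_zero] <;> ring)
    · have := hp.mul_const b
      simp only [pderiv_mul, pderiv_X_of_ne (by decide : (1:Fin 2) ≠ 0), map_add, map_mul, eval_X, Pi.mul_def] at *
      exact this.congr_deriv (by simp <;> ring)

lemma hasDerivAt_eval1 (P : MvPolynomial (Fin 2) ℂ) (a z : ℂ) :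
    HasDerivAt (fun b : ℂ => eval ![a, b] P) (eval ![a, z] (pderiv 1 P)) z := by
  induction P using MvPolynomial.induction_on with
  | C c => simpa using hasDerivAt_const z c
  | add p q hp hq => simpa [Pi.add_def] using hp.add hq
  | mul_X p i hp =>
    fin_cases i
    · have := hp.mul_const a
      simp only [pderiv_mul, pderiv_X_of_ne (by decide : (0:Fin 2) ≠ 1), map_add, map_mul, eval_X, Pi.mul_def] at *
      exact this.congr_deriv (by simp <;> ring)
    · have := hp.mul (hasDerivAt_id z)
      simp only [pderiv_mul, pderiv_X_self, map_add, map_mul, eval_X, Pi.mul_def] at *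
      exact this.congr_deriv (by simp <;> ring)

noncomputable def QQ (s t : ℂ) (P : MvPolynomial (Fin 2) ℂ) : MvPolynomial (Fin 2) ℂ :=
  C (s + 1) * (X 1 * P) - C (t + 1) * (X 0 * P)
    + (X 1 * (X 0 * pderiv 0 P) - X 0 * (X 1 * pderiv 1 P))

lemma QQ_homog {P : MvPolynomial (Fin 2) ℂ} {n : ℕ} (hP : P.IsHomogeneous n) (s t : ℂ) :
    (QQ s t P).IsHomogeneous (n + 1) := by
  have h0 := X_mul_pderiv_homog hP (0 : Fin 2)
  have h1 := X_mul_pderiv_homog hP (1 : Fin 2)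
  have e : n + 1 = 1 + n := by omega
  rw [e]
  exact ((((isHomogeneous_X ℂ (1 : Fin 2)).mul hP).C_mul _).sub
      (((isHomogeneous_X ℂ (0 : Fin 2)).mul hP).C_mul _)).add
    (((isHomogeneous_X ℂ (1 : Fin 2)).mul h0).sub ((isHomogeneous_X ℂ (0 : Fin 2)).mul h1))

lemma eval_QQ (s t : ℂ) (P : MvPolynomial (Fin 2) ℂ) (a b : ℂ) :
    eval ![a, b] (QQ s t P) = (s + 1) * b * eval ![a, b] P - (t + 1) * a * eval ![a, b] P
      + a * b * eval ![a, b] (pderiv 0 P) - a * b * eval ![a, b] (pderiv 1 P) := by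
  simp [QQ]; ring

lemma step (s t : ℂ) (P : MvPolynomial (Fin 2) ℂ) {x y : ℝ} (hx : 0 < x) (hy : 0 < y) :
    Dop (fun u v => (u : ℂ) ^ (s + 1) * (v : ℂ) ^ (t + 1) * eval ![(u : ℂ), (v : ℂ)] P) x y
      = (x : ℂ) ^ s * (y : ℂ) ^ t * eval ![(x : ℂ), (y : ℂ)] (QQ s t P) := by
  have hx' : (x : ℂ) ≠ 0 := ofReal_ne_zero.2 hx.ne'
  have hy' : (y : ℂ) ≠ 0 := ofReal_ne_zero.2 hy.ne'
  have h1 : HasDerivAt (fun u : ℝ => (u : ℂ) ^ (s + 1)) ((s + 1) * (x : ℂ) ^ s) x := by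
    have h : HasDerivAt (fun u : ℝ => (u : ℂ) ^ (s + 1))
        ((s + 1) * (x : ℂ) ^ (s + 1 - 1) * 1) x :=
      ((hasDerivAt_id (x : ℂ)).cpow_const (ofReal_mem_slitPlane.2 hx)).comp_ofReal
    simpa [add_sub_cancel_right] using h
  have h2 : HasDerivAt (fun v : ℝ => (v : ℂ) ^ (t + 1)) ((t + 1) * (y : ℂ) ^ t) y := by
    have h : HasDerivAt (fun v : ℝ => (v : ℂ) ^ (t + 1))
        ((t + 1) * (y : ℂ) ^ (t + 1 - 1) * 1) y :=
      ((hasDerivAt_id (y : ℂ)).cpow_const (ofReal_mem_slitPlane.2 hy)).comp_ofReal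
    simpa [add_sub_cancel_right] using h
  have e0 : HasDerivAt (fun u : ℝ => eval ![(u : ℂ), (y : ℂ)] P)
      (eval ![(x : ℂ), (y : ℂ)] (pderiv 0 P)) x := (hasDerivAt_eval0 P _ _).comp_ofReal
  have e1 : HasDerivAt (fun v : ℝ => eval ![(x : ℂ), (v : ℂ)] P)
      (eval ![(x : ℂ), (y : ℂ)] (pderiv 1 P)) y := (hasDerivAt_eval1 P _ _).comp_ofReal
  have d1 := ((h1.mul_const ((y : ℂ) ^ (t + 1))).mul e0).deriv
  have d2 := (((h2.const_mul ((x : ℂ) ^ (s + 1)))).mul e1).deriv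
  simp only [Pi.mul_def] at d1 d2
  rw [Dop]
  rw [show (fun u : ℝ => (u : ℂ) ^ (s + 1) * (y : ℂ) ^ (t + 1) * eval ![(u : ℂ), (y : ℂ)] P)
      = fun u : ℝ => ((u : ℂ) ^ (s + 1) * (y : ℂ) ^ (t + 1)) * eval ![(u : ℂ), (y : ℂ)] P from rfl,
    show (fun v : ℝ => (x : ℂ) ^ (s + 1) * (v : ℂ) ^ (t + 1) * eval ![(x : ℂ), (v : ℂ)] P)
      = fun v : ℝ => ((x : ℂ) ^ (s + 1) * (v : ℂ) ^ (t + 1)) * eval ![(x : ℂ), (v : ℂ)] P from rfl,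
    d1, d2, eval_QQ]
  have hxs : (x : ℂ) ^ (s + 1) = (x : ℂ) ^ s * (x : ℂ) := by
    rw [Complex.cpow_add _ _ hx', Complex.cpow_one]
  have hys : (y : ℂ) ^ (t + 1) = (y : ℂ) ^ t * (y : ℂ) := by
    rw [Complex.cpow_add _ _ hy', Complex.cpow_one]
  rw [hxs, hys]
  ring

lemma eval_eval₂ (f : Fin 2 → Polynomial ℂ) (P : MvPolynomial (Fin 2) ℂ) (c : ℂ) :
    Polynomial.eval c (eval₂ Polynomial.C f P)
      = eval (fun i => Polynomial.eval c (f i)) P := by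
  have h := MvPolynomial.eval₂_comp_left (Polynomial.evalRingHom c) Polynomial.C f P
  rw [show (Polynomial.evalRingHom c).comp Polynomial.C = RingHom.id ℂ from by ext a; simp] at h
  rw [show Polynomial.eval c (eval₂ Polynomial.C f P)
      = (Polynomial.evalRingHom c) (eval₂ Polynomial.C f P) from rfl, h]
  rfl


lemma eval_eq_zero_of_quadrant (P : MvPolynomial (Fin 2) ℂ)
    (h : ∀ x y : ℝ, 0 < x → 0 < y → eval ![(x : ℂ), (y : ℂ)] P = 0) : P = 0 := by
  have hinf : ((fun x : ℝ => (x : ℂ)) '' Set.Ioi 0).Infinite :=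
    (Set.Ioi_infinite 0).image Complex.ofReal_injective.injOn
  have h1 : ∀ x : ℝ, 0 < x → ∀ b : ℂ, eval ![(x : ℂ), b] P = 0 := by
    intro x hx b
    have hzero : eval₂ Polynomial.C ![Polynomial.C (x : ℂ), Polynomial.X] P = 0 := by
      apply Polynomial.eq_zero_of_infinite_isRoot
      apply hinf.mono
      rintro _ ⟨y, hy, rfl⟩
      have := h x y hx hy
      simp only [Set.mem_setOf_eq, Polynomial.IsRoot, eval_eval₂]
      rw [show (fun i => Polynomial.eval (y : ℂ) (![Polynomial.C (x : ℂ), Polynomial.X] i))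
          = ![(x : ℂ), (y : ℂ)] from funext fun i => by fin_cases i <;> simp]
      exact this
    have := congrArg (Polynomial.eval b) hzero
    rw [eval_eval₂] at this
    rw [show ![(x : ℂ), b] = (fun i => Polynomial.eval b (![Polynomial.C (x : ℂ), Polynomial.X] i))
        from funext fun i => by fin_cases i <;> simp]
    simpa using this
  have h2 : ∀ a b : ℂ, eval ![a, b] P = 0 := by
    intro a b
    have hzero : eval₂ Polynomial.C ![Polynomial.X, Polynomial.C b] P = 0 := by
      apply Polynomial.eq_zero_of_infinite_isRoot
      apply hinf.mono
      rintro _ ⟨x, hx, rfl⟩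
      have := h1 x hx b
      simp only [Set.mem_setOf_eq, Polynomial.IsRoot, eval_eval₂]
      rw [show (fun i => Polynomial.eval (x : ℂ) (![Polynomial.X, Polynomial.C b] i))
          = ![(x : ℂ), b] from funext fun i => by fin_cases i <;> simp]
      exact this
    have := congrArg (Polynomial.eval a) hzero
    rw [eval_eval₂] at this
    rw [show ![a, b] = (fun i => Polynomial.eval a (![Polynomial.X, Polynomial.C b] i))
        from funext fun i => by fin_cases i <;> simp]
    simpa using this
  apply MvPolynomial.funext
  intro v
  rw [show v = ![v 0, v 1] from funext fun i => by fin_cases i <;> rfl]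
  simpa using h2 (v 0) (v 1)

noncomputable def qpoly : ℕ → ℂ → ℂ → MvPolynomial (Fin 2) ℂ
  | 0, _, _ => 1
  | k + 1, s, t => QQ s t (qpoly k (s + 1) (t + 1))

lemma qpoly_spec : ∀ (k : ℕ) (s t : ℂ),
    (qpoly k s t).IsHomogeneous k ∧
    ∀ x y : ℝ, 0 < x → 0 < y →
      (Dop^[k] (fun ξ η => (ξ : ℂ) ^ (s + k) * (η : ℂ) ^ (t + k))) x y
        = (x : ℂ) ^ s * (y : ℂ) ^ t * eval ![(x : ℂ), (y : ℂ)] (qpoly k s t) := by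
  intro k
  induction k with
  | zero =>
    intro s t
    refine ⟨isHomogeneous_one _ _, fun x y hx hy => ?_⟩
    simp [qpoly]
  | succ k ih =>
    intro s t
    obtain ⟨hhom, heq⟩ := ih (s + 1) (t + 1)
    refine ⟨QQ_homog hhom s t, fun x y hx hy => ?_⟩
    have hfun : (fun ξ η : ℝ => (ξ : ℂ) ^ (s + (k + 1 : ℕ)) * (η : ℂ) ^ (t + (k + 1 : ℕ)))
        = fun ξ η : ℝ => (ξ : ℂ) ^ ((s + 1) + k) * (η : ℂ) ^ ((t + 1) + k) := by
      funext ξ η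
      push_cast
      ring_nf
    rw [hfun, Function.iterate_succ_apply']
    set G : ℝ → ℝ → ℂ := fun u v =>
      (u : ℂ) ^ (s + 1) * (v : ℂ) ^ (t + 1) * eval ![(u : ℂ), (v : ℂ)] (qpoly k (s + 1) (t + 1))
      with hG
    have key : Dop (Dop^[k] fun ξ η : ℝ => (ξ : ℂ) ^ ((s + 1) + k) * (η : ℂ) ^ ((t + 1) + k)) x y
        = Dop G x y := by
      rw [Dop, Dop]
      congr 1
      · apply Filter.EventuallyEq.deriv_eq
        filter_upwards [Ioi_mem_nhds hx] with u hu
        exact heq u y hu hy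
      · apply Filter.EventuallyEq.deriv_eq
        filter_upwards [Ioi_mem_nhds hy] with v hv
        exact heq x v hx hv
    rw [key, hG]
    exact step s t _ hx hy

theorem stmt0 (s t : ℂ) (k : ℕ) :
    ∃! q : MvPolynomial (Fin 2) ℂ,
      q.IsHomogeneous k ∧
      ∀ x y : ℝ, 0 < x → 0 < y →
        (Dop^[k] (fun ξ η => (ξ : ℂ) ^ (s + k) * (η : ℂ) ^ (t + k))) x y
          = (x : ℂ) ^ s * (y : ℂ) ^ t * MvPolynomial.eval ![(x : ℂ), (y : ℂ)] q := by
  obtain ⟨hhom, heq⟩ := qpoly_spec k s t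
  refine ⟨qpoly k s t, ⟨hhom, heq⟩, ?_⟩
  rintro q' ⟨-, heq'⟩
  have hz : q' - qpoly k s t = 0 := by
    apply eval_eq_zero_of_quadrant
    intro x y hx hy
    have h1 := heq' x y hx hy
    have h2 := heq x y hx hy
    have hx' : (x : ℂ) ^ s ≠ 0 := by
      simp [Complex.cpow_eq_zero_iff, ofReal_ne_zero.2 hx.ne']
    have hy' : (y : ℂ) ^ t ≠ 0 := by
      simp [Complex.cpow_eq_zero_iff, ofReal_ne_zero.2 hy.ne']
    have := h1.symm.trans h2
    rw [map_sub]
    have hmul : (x : ℂ) ^ s * (y : ℂ) ^ t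
        * (eval ![(x : ℂ), (y : ℂ)] q' - eval ![(x : ℂ), (y : ℂ)] (qpoly k s t)) = 0 := by
      rw [mul_sub]
      rw [mul_assoc, mul_assoc] at this ⊢
      rw [this]; ring
    rcases mul_eq_zero.1 hmul with h | h
    · exact absurd h (mul_ne_zero hx' hy')
    · exact h
  linear_combination (norm := module) hz
end

section
/- For γ ∈ ℂ and every natural number k, there exists a polynomial B_k^γ on ℝ^n such that (∂/∂ξ_n)^k |ξ|^{2(γ+k)} = B_k^γ(ξ) · |ξ|^{2γ} on ℝ^n \ {0}, with B_0^γ = 1, and B_k^γ is homogeneous of degree k. -/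
open MvPolynomial Complex

/-- Partial derivative in the `i`-th coordinate of a function on ℝ^m. -/
noncomputable def pd {m : ℕ} (i : Fin m) (f : (Fin m → ℝ) → ℂ) : (Fin m → ℝ) → ℂ :=
  fun x => deriv (fun t => f (Function.update x i t)) (x i)

lemma isHomogeneous_pderiv {m k : ℕ} (i : Fin m) {B : MvPolynomial (Fin m) ℂ}
    (h : B.IsHomogeneous (k + 1)) : (pderiv i B).IsHomogeneous k := by
  have hB : pderiv i B = ∑ d ∈ B.support, pderiv i (monomial d (coeff d B)) := by
    rw [← map_sum, ← B.as_sum]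
  rw [hB]
  apply IsHomogeneous.sum
  intro d hd
  rw [pderiv_monomial]
  by_cases hdi : d i = 0
  · simp [hdi, isHomogeneous_zero]
  · apply isHomogeneous_monomial
    have hdeg : d.degree = k + 1 := by
      rw [Finsupp.degree_eq_weight_one]; exact h (mem_support_iff.mp hd)
    have hle : Finsupp.single i 1 ≤ d := by
      rw [Finsupp.single_le_iff]; omega
    have hd2 : (d - Finsupp.single i 1) + Finsupp.single i 1 = d := tsub_add_cancel_of_le hle
    have hs1 : (Finsupp.single i 1 : Fin m →₀ ℕ).degree = 1 := by
      exact Finsupp.degree_single i 1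
    have hadd : (d - Finsupp.single i 1).degree + (Finsupp.single i 1).degree = k + 1 := by
      simp only [Finsupp.degree_eq_weight_one] at hdeg ⊢
      rw [← map_add, hd2, hdeg]
    rw [hs1] at hadd
    omega

lemma hasDerivAt_eval_update {m : ℕ} (i : Fin m) (B : MvPolynomial (Fin m) ℂ)
    (c : Fin m → ℂ) (z : ℂ) :
    HasDerivAt (fun w : ℂ => eval (Function.update c i w) B)
      (eval (Function.update c i z) (pderiv i B)) z := by
  induction B using MvPolynomial.induction_on with
  | C a => simp only [eval_C, pderiv_C, eval_zero]; exact hasDerivAt_const z a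
  | add p q hp hq =>
    have hpq : HasDerivAt (fun w : ℂ => eval (Function.update c i w) p
        + eval (Function.update c i w) q) _ z := hp.add hq
    simpa only [eval_add, map_add] using hpq
  | mul_X p j hp =>
    have hx : HasDerivAt (fun w : ℂ => Function.update c i w j)
        (if i = j then 1 else 0) z := by
      rcases eq_or_ne i j with rfl | hij
      · rw [if_pos rfl]
        exact (hasDerivAt_id z).congr_of_eventuallyEq (Filter.Eventually.of_forall fun w => by simp)
      · rw [if_neg hij]
        simpa [Function.update_of_ne (Ne.symm hij)] using hasDerivAt_const z (c j)
    have hXj : eval (Function.update c i z) (pderiv i (X j : MvPolynomial (Fin m) ℂ))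
        = if i = j then 1 else 0 := by
      rcases eq_or_ne i j with rfl | hij
      · simp [pderiv_X_self]
      · rw [if_neg hij]
        simp [pderiv_X, Pi.single_eq_of_ne (Ne.symm hij)]
    have : HasDerivAt (fun w : ℂ => eval (Function.update c i w) p
        * Function.update c i w j) _ z := hp.mul hx
    simp only [eval_mul, eval_X, pderiv_mul, eval_add, eval_mul, hXj]
    convert this using 1

theorem stmt5 (n : ℕ) (γ : ℂ) (k : ℕ) :
    ∃ B : MvPolynomial (Fin (n + 1)) ℂ,
      B.IsHomogeneous k ∧ (k = 0 → B = 1) ∧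
      ∀ ξ : Fin (n + 1) → ℝ, ξ ≠ 0 →
        ((pd (Fin.last n))^[k]
            (fun x => ((∑ j, x j ^ 2 : ℝ) : ℂ) ^ (γ + k))) ξ
          = MvPolynomial.eval (fun j => (ξ j : ℂ)) B * ((∑ j, ξ j ^ 2 : ℝ) : ℂ) ^ γ := by
  induction k generalizing γ with
  | zero =>
    refine ⟨1, isHomogeneous_one _ _, fun _ => rfl, fun ξ hξ => ?_⟩
    simp
  | succ k ih =>
    obtain ⟨B', hB'hom, hB'1, hB'⟩ := ih (γ + 1)
    set L := Fin.last n
    refine ⟨(∑ j, X j ^ 2) * pderiv L B'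
        + C (2 * (γ + 1)) * (X L * B'), ?_, ?_, ?_⟩
    · -- homogeneity
      have hsq : (∑ j, (X j : MvPolynomial (Fin (n + 1)) ℂ) ^ 2).IsHomogeneous 2 := by
        apply IsHomogeneous.sum
        intro j _
        rw [pow_two]
        exact (isHomogeneous_X ℂ j).mul (isHomogeneous_X ℂ j)
      apply IsHomogeneous.add
      · rcases k with _ | k
        · rw [hB'1 rfl]
          simp only [pderiv_one, mul_zero]
          exact isHomogeneous_zero _ _ _
        · have := hsq.mul (isHomogeneous_pderiv L hB'hom)
          convert this using 1
          omega
      · have := (isHomogeneous_C (Fin (n + 1)) (2 * (γ + 1))).mul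
          ((isHomogeneous_X ℂ L).mul hB'hom)
        convert this using 1
        omega
    · intro h; omega
    · intro ξ hξ
      have hpos : (0 : ℝ) < ∑ j, ξ j ^ 2 := by
        obtain ⟨j, hj⟩ := Function.ne_iff.mp hξ
        exact Finset.sum_pos' (fun i _ => sq_nonneg _)
          ⟨j, Finset.mem_univ j, pow_two_pos_of_ne_zero hj⟩
      set c : Fin (n + 1) → ℂ := fun j => (ξ j : ℂ) with hc
      set t₀ : ℝ := ξ L with ht₀
      have hX0 : ((∑ j, ξ j ^ 2 : ℝ) : ℂ) ≠ 0 := by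
        exact_mod_cast hpos.ne'
      -- rewrite exponent
      have hfeq : (fun x : Fin (n + 1) → ℝ => ((∑ j, x j ^ 2 : ℝ) : ℂ) ^ (γ + ((k : ℕ) + 1 : ℕ)))
          = fun x : Fin (n + 1) → ℝ => ((∑ j, x j ^ 2 : ℝ) : ℂ) ^ ((γ + 1) + (k : ℕ)) := by
        funext x
        congr 1
        push_cast
        ring
      rw [hfeq, Function.iterate_succ_apply']
      show deriv (fun t => ((pd L)^[k]
          (fun x => ((∑ j, x j ^ 2 : ℝ) : ℂ) ^ ((γ + 1) + (k : ℕ))))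
          (Function.update ξ L t)) (ξ L) = _
      -- the sum splits
      set S : ℝ := ∑ j ∈ Finset.univ \ {L}, ξ j ^ 2 with hS
      have hsum : ∀ t : ℝ, (∑ j, Function.update ξ L t j ^ 2) = t ^ 2 + S := by
        intro t
        have : ∀ j, Function.update ξ L t j ^ 2
            = Function.update (fun j => ξ j ^ 2) L (t ^ 2) j := by
          intro j
          rcases eq_or_ne j L with rfl | hj
          · simp
          · simp [Function.update_of_ne hj]
        simp only [this]
        rw [Finset.sum_update_of_mem (Finset.mem_univ L)]
      have hsum0 : t₀ ^ 2 + S = ∑ j, ξ j ^ 2 := by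
        rw [← hsum t₀, ht₀, Function.update_eq_self]
      have hcoe : ∀ t : ℝ, (fun j => ((Function.update ξ L t j : ℝ) : ℂ))
          = Function.update c L (t : ℂ) := by
        intro t
        funext j
        rcases eq_or_ne j L with rfl | hj
        · simp
        · simp [Function.update_of_ne hj, hc]
      -- eventual equality
      have hcont : Continuous fun t : ℝ => Function.update ξ L t :=
        continuous_const.update L continuous_id
      have hev0 : ∀ᶠ t in nhds t₀, Function.update ξ L t ≠ 0 := by
        have h1 : Function.update ξ L t₀ ≠ 0 := by
          rw [ht₀, Function.update_eq_self]; exact hξ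
        exact (hcont.continuousAt).eventually_ne h1
      have hev : (fun t => ((pd L)^[k]
            (fun x => ((∑ j, x j ^ 2 : ℝ) : ℂ) ^ ((γ + 1) + (k : ℕ))))
            (Function.update ξ L t))
          =ᶠ[nhds t₀] fun t =>
            eval (Function.update c L (t : ℂ)) B' * (((t : ℂ) ^ 2 + (S : ℂ)) ^ (γ + 1)) := by
        refine hev0.mono fun t ht => ?_
        show (pd L)^[k] _ (Function.update ξ L t) = _
        rw [hB' _ ht, hcoe t]
        congr 2
        rw [hsum t]
        push_cast
        ring
      rw [← ht₀, hev.deriv_eq]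
      -- compute the derivative
      have hP : HasDerivAt (fun w : ℂ => eval (Function.update c L w) B')
          (eval c (pderiv L B')) (t₀ : ℂ) := by
        have := hasDerivAt_eval_update L B' c (t₀ : ℂ)
        rwa [show Function.update c L (t₀ : ℂ) = c by
          rw [ht₀, hc]; exact Function.update_eq_self _ _] at this
      have hbase : HasDerivAt (fun w : ℂ => w ^ 2 + (S : ℂ)) (2 * (t₀ : ℂ)) (t₀ : ℂ) := by
        simpa using (hasDerivAt_pow 2 (t₀ : ℂ)).add_const (S : ℂ)
      have hmem : ((t₀ : ℂ) ^ 2 + (S : ℂ)) ∈ slitPlane := by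
        have : ((t₀ : ℂ) ^ 2 + (S : ℂ)) = ((t₀ ^ 2 + S : ℝ) : ℂ) := by push_cast; ring
        rw [this]
        exact ofReal_mem_slitPlane.2 (by rw [hsum0]; exact hpos)
      have hpow : HasDerivAt (fun w : ℂ => (w ^ 2 + (S : ℂ)) ^ (γ + 1))
          ((γ + 1) * ((t₀ : ℂ) ^ 2 + (S : ℂ)) ^ γ * (2 * (t₀ : ℂ))) (t₀ : ℂ) := by
        have := hbase.cpow_const (c := γ + 1) hmem
        simpa using this
      have htot := (hP.mul hpow).comp_ofReal
      simp only [Pi.mul_apply] at htot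
      rw [htot.deriv, show Function.update c L ((t₀ : ℝ) : ℂ) = c from by
        rw [ht₀, hc]; exact Function.update_eq_self _ _]
      -- now the algebra
      have hXS : ((t₀ : ℂ) ^ 2 + (S : ℂ)) = ((∑ j, ξ j ^ 2 : ℝ) : ℂ) := by
        rw [← hsum0]; push_cast; ring
      have hcpow : ((∑ j, ξ j ^ 2 : ℝ) : ℂ) ^ (γ + 1)
          = ((∑ j, ξ j ^ 2 : ℝ) : ℂ) ^ γ * ((∑ j, ξ j ^ 2 : ℝ) : ℂ) := by
        rw [cpow_add _ _ hX0, cpow_one]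
      have hXsum : (∑ j, c j ^ 2) = ((∑ j, ξ j ^ 2 : ℝ) : ℂ) := by
        rw [hc]; push_cast; ring
      simp only [eval_add, eval_mul, eval_C, eval_X, eval_sum, eval_pow, hXS, hcpow, hXsum]
      rw [show c L = (t₀ : ℂ) by rw [hc, ht₀]]
      ring
end

section
/- Define polynomials A_k^γ in two variables (s,t) by (∂/∂t)^k (s²+t²)^{γ+k} = A_k^γ(s,t) (s²+t²)^γ. Then A_k^γ(s,t) = c_k(γ+1/2)^{-1} (-i)^k s^k C_k^{γ+1/2}(t/(is)), where C_k^λ is the Gegenbauer polynomial defined by the Rodrigues formula C_k^λ(t) = c_k(λ)(1-t²)^{-(λ-1/2)}(d/dt)^k (1-t²)^{k+λ-1/2} with c_k(λ) = (-1)^k Γ(λ+1/2)Γ(k+2λ) / (2^k k! Γ(2λ) Γ(k+λ+1/2)). -/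
open MvPolynomial Complex

/-- The constant `c_k(λ)` in the Rodrigues formula for the Gegenbauer polynomials. -/
noncomputable def ckG (k : ℕ) (l : ℂ) : ℂ :=
  ((-1 : ℂ) ^ k * Complex.Gamma (l + 1 / 2) * Complex.Gamma (k + 2 * l)) /
    (2 ^ k * (Nat.factorial k : ℂ) * Complex.Gamma (2 * l) * Complex.Gamma (k + l + 1 / 2))

section Helpers

open Filter


/-- Scaling lemma: real iterated derivative of `u ↦ C * F (c*u)` in terms of the
complex iterated derivative of an analytic `F`. -/
lemma scaleIter : ∀ (n : ℕ) (F : ℂ → ℂ) (U : Set ℂ), IsOpen U → AnalyticOnNhd ℂ F U →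
    ∀ (c C : ℂ) (t : ℝ), c * t ∈ U →
    iteratedDeriv n (fun u : ℝ => C * F (c * u)) t = C * c ^ n * iteratedDeriv n F (c * t) := by
  intro n
  induction n with
  | zero => intro F U hU hF c C t ht; simp
  | succ n IH =>
    intro F U hU hF c C t ht
    rw [iteratedDeriv_succ', iteratedDeriv_succ']
    have hV : IsOpen {u : ℝ | c * (u : ℂ) ∈ U} := by
      have : Continuous fun u : ℝ => c * (u : ℂ) := by continuity
      exact this.isOpen_preimage U hU
    have hEv : deriv (fun u : ℝ => C * F (c * u)) =ᶠ[nhds t]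
        fun u : ℝ => (C * c) * deriv F (c * u) := by
      filter_upwards [hV.mem_nhds ht] with u hu
      have hd : HasDerivAt F (deriv F (c * u)) (c * u) :=
        ((hF _ hu).differentiableAt).hasDerivAt
      have h2 : HasDerivAt (fun w : ℂ => F (c * w)) (deriv F (c * u) * c) (u : ℂ) := by
        have hid : HasDerivAt (fun w : ℂ => c * w) (c * 1) (u : ℂ) :=
          (hasDerivAt_id _).const_mul c
        have h4 : HasDerivAt (fun w : ℂ => c * w) c (u : ℂ) := by simpa using hid
        exact hd.comp (u : ℂ) h4
      have h3 : HasDerivAt (fun u : ℝ => C * F (c * u)) (C * (deriv F (c * u) * c)) u :=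
        (h2.const_mul C).comp_ofReal
      rw [h3.deriv]; ring
    rw [hEv.iteratedDeriv_eq n, IH (deriv F) U hU (hF.deriv) c (C * c) t ht]
    ring

/-- Differentiability of the evaluation of a 2-variable polynomial. -/
lemma mvdiff (A : MvPolynomial (Fin 2) ℂ) (v w : ℂ → ℂ) (hv : Differentiable ℂ v)
    (hw : Differentiable ℂ w) :
    Differentiable ℂ fun z => MvPolynomial.eval ![v z, w z] A := by
  induction A using MvPolynomial.induction_on with
  | C c => simpa using differentiable_const c
  | add p q hp hq => simp only [map_add]; exact hp.add hq
  | mul_X p i hp =>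
    have he : (fun z => MvPolynomial.eval ![v z, w z] (p * MvPolynomial.X i))
        = fun z => MvPolynomial.eval ![v z, w z] p * (![v z, w z] i) := by
      funext z; simp
    rw [he]
    fin_cases i
    · exact hp.mul hv
    · exact hp.mul hw

lemma freqHelp {f g : ℂ → ℂ} {z₀ : ℂ} (x : ℕ → ℂ) (hx : Tendsto x atTop (nhds z₀))
    (hne : ∀ n, x n ≠ z₀) (heq : ∀ n, f (x n) = g (x n)) :
    ∃ᶠ z in nhdsWithin z₀ {z₀}ᶜ, f z = g z := by
  have h : Tendsto x atTop (nhdsWithin z₀ {z₀}ᶜ) :=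
    tendsto_nhdsWithin_of_tendsto_nhds_of_eventually_within x hx
      (Eventually.of_forall hne)
  exact h.frequently (Frequently.of_forall heq)

lemma tendsto_aux : Tendsto (fun n : ℕ => (1 / (n + 2) : ℝ)) atTop (nhds 0) := by
  have := (tendsto_one_div_add_atTop_nhds_zero_nat (𝕜 := ℝ)).comp (tendsto_add_atTop_nat 1)
  have h2 : (fun n : ℕ => (1 / (n + 2) : ℝ)) = fun n : ℕ => 1 / (((n + 1 : ℕ) : ℝ) + 1) := by
    funext n; push_cast; ring_nf
  rw [h2]; exact this

/-- The key pointwise identity on the segment `t = I s u`, `u ∈ (-1,1)`, `s > 0`. -/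
lemma keyLemma (γ : ℂ) (k : ℕ) (A : MvPolynomial (Fin 2) ℂ) (Cg : Polynomial ℂ)
    (hck : ((-1 : ℂ)) = -1) (c : ℂ) (hc : c ≠ 0)
    (hA : ∀ s t : ℝ, 0 < s →
      iteratedDeriv k (fun u : ℝ => ((s ^ 2 + u ^ 2 : ℝ) : ℂ) ^ (γ + k)) t
        = MvPolynomial.eval ![(s : ℂ), (t : ℂ)] A * ((s ^ 2 + t ^ 2 : ℝ) : ℂ) ^ γ)
    (hCg : ∀ t ∈ Set.Ioo (-1 : ℝ) 1,
      Cg.eval (t : ℂ)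
        = c * ((1 - t ^ 2 : ℝ) : ℂ) ^ (-γ) *
            iteratedDeriv k (fun u : ℝ => ((1 - u ^ 2 : ℝ) : ℂ) ^ ((k : ℂ) + γ)) t)
    (s : ℝ) (hs : 0 < s) (u : ℝ) (hu : u ∈ Set.Ioo (-1 : ℝ) 1) :
    MvPolynomial.eval ![(s : ℂ), Complex.I * s * u] A
      = c⁻¹ * (-Complex.I) ^ k * (s : ℂ) ^ k * Cg.eval (u : ℂ) := by
  have hsC : (s : ℂ) ≠ 0 := ofReal_ne_zero.mpr hs.ne'
  set F : ℂ → ℂ := fun z => ((s : ℂ) ^ 2 + z ^ 2) ^ (γ + k) with hF_def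
  set B : Set ℂ := Metric.ball (0 : ℂ) s with hB_def
  -- slit plane membership on the ball
  have hslitB : ∀ z ∈ B, ((s : ℂ) ^ 2 + z ^ 2) ∈ slitPlane := by
    intro z hz
    rw [Complex.mem_slitPlane_iff]
    left
    have h1 : ‖z‖ < s := by
      simpa [hB_def, Complex.dist_eq] using hz
    have h2 : ((s : ℂ) ^ 2 + z ^ 2).re = s ^ 2 + (z ^ 2).re := by
      simp [Complex.add_re, ← Complex.ofReal_pow]
    have h3 : |(z ^ 2).re| ≤ ‖z‖ ^ 2 := by
      have := Complex.abs_re_le_norm (z ^ 2)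
      rwa [norm_pow] at this
    have h4 := (abs_le.mp h3).1
    have h5 := norm_nonneg z
    rw [h2]; nlinarith
  have hFan : AnalyticOnNhd ℂ F B := by
    apply DifferentiableOn.analyticOnNhd _ Metric.isOpen_ball
    intro z hz
    have hb : DifferentiableAt ℂ (fun z : ℂ => (s : ℂ) ^ 2 + z ^ 2) z := by fun_prop
    exact (hb.cpow (differentiableAt_const _) (hslitB z hz)).differentiableWithinAt
  have hAfun_eq : (fun t : ℝ => ((s ^ 2 + t ^ 2 : ℝ) : ℂ) ^ (γ + k))
      = fun t : ℝ => 1 * F (1 * t) := by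
    funext t
    simp only [hF_def, one_mul]
    congr 1
    push_cast; ring
  set H₂ : ℂ → ℂ := fun z => MvPolynomial.eval ![(s : ℂ), z] A * ((s : ℂ) ^ 2 + z ^ 2) ^ γ
    with hH2_def
  have hH2an : AnalyticOnNhd ℂ H₂ B := by
    apply DifferentiableOn.analyticOnNhd _ Metric.isOpen_ball
    intro z hz
    have hb : DifferentiableAt ℂ (fun z : ℂ => (s : ℂ) ^ 2 + z ^ 2) z := by fun_prop
    exact (((mvdiff A (fun _ => (s : ℂ)) id (differentiable_const _)
      differentiable_id) z).mul (hb.cpow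
      (differentiableAt_const _) (hslitB z hz))).differentiableWithinAt
  have hIterAn : AnalyticOnNhd ℂ (iteratedDeriv k F) B := by
    rw [iteratedDeriv_eq_iterate]; exact hFan.iterated_deriv k
  have hrealEq : ∀ t : ℝ, (t : ℂ) ∈ B → iteratedDeriv k F (t : ℂ) = H₂ (t : ℂ) := by
    intro t ht
    have h1 := scaleIter k F B Metric.isOpen_ball hFan 1 1 t (by simpa using ht)
    rw [← hAfun_eq, hA s t hs] at h1
    have h2 : iteratedDeriv k F ((t : ℂ)) =
        MvPolynomial.eval ![(s : ℂ), (t : ℂ)] A * ((s ^ 2 + t ^ 2 : ℝ) : ℂ) ^ γ := by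
      simpa using h1.symm
    rw [h2, hH2_def]
    congr 2
    push_cast; ring
  -- identity theorem : iteratedDeriv k F = H₂ on the ball
  have hEqOn : Set.EqOn (iteratedDeriv k F) H₂ B := by
    apply hIterAn.eqOn_of_preconnected_of_frequently_eq hH2an
      (convex_ball (0 : ℂ) s).isPreconnected (z₀ := 0) (by simp [hB_def, hs])
    apply freqHelp (fun n : ℕ => ((s * (1 / (n + 2)) : ℝ) : ℂ))
    · have h1 : Tendsto (fun n : ℕ => (s * (1 / (n + 2)) : ℝ)) atTop (nhds (s * 0)) :=
        tendsto_aux.const_mul s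
      simpa using h1.ofReal
    · intro n
      have h0 : (0 : ℝ) < s * (1 / (n + 2)) := by positivity
      exact Complex.ofReal_ne_zero.mpr h0.ne'
    · intro n
      apply hrealEq
      have h2 : (1 : ℝ) / ((n : ℝ) + 2) < 1 := by
        rw [div_lt_one (by positivity)]; linarith [Nat.cast_nonneg (α := ℝ) n]
      have habs : |s * (1 / ((n : ℝ) + 2))| < s := by
        rw [abs_of_pos (by positivity)]
        nlinarith
      rw [hB_def, Metric.mem_ball, Complex.dist_eq, sub_zero, Complex.norm_real, Real.norm_eq_abs]
      exact habs
  -- the point on the imaginary segment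
  have huabs : |u| < 1 := abs_lt.mpr ⟨hu.1, hu.2⟩
  have hP : (Complex.I * s) * (u : ℂ) ∈ B := by
    have : ‖Complex.I * s * u‖ = s * |u| := by
      simp [abs_of_pos hs]
    simp only [hB_def, Metric.mem_ball, Complex.dist_eq, sub_zero]
    rw [this]
    nlinarith
  -- the Gegenbauer side
  set G : ℂ → ℂ := fun w => (1 - w ^ 2) ^ ((k : ℂ) + γ) with hG_def
  set B1 : Set ℂ := Metric.ball (0 : ℂ) 1 with hB1_def
  have hslit1 : ∀ w ∈ B1, ((1 : ℂ) - w ^ 2) ∈ slitPlane := by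
    intro w hw
    rw [Complex.mem_slitPlane_iff]
    left
    have h1 : ‖w‖ < 1 := by simpa [hB1_def, Complex.dist_eq] using hw
    have h3 : |(w ^ 2).re| ≤ ‖w‖ ^ 2 := by
      have := Complex.abs_re_le_norm (w ^ 2)
      rwa [norm_pow] at this
    have h4 := (abs_le.mp h3).2
    have h5 := norm_nonneg w
    have h6 : ((1 : ℂ) - w ^ 2).re = 1 - (w ^ 2).re := by simp [Complex.sub_re]
    rw [h6]; nlinarith
  have hGan : AnalyticOnNhd ℂ G B1 := by
    apply DifferentiableOn.analyticOnNhd _ Metric.isOpen_ball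
    intro z hz
    have hb : DifferentiableAt ℂ (fun w : ℂ => (1 : ℂ) - w ^ 2) z := by fun_prop
    exact (hb.cpow (differentiableAt_const _) (hslit1 z hz)).differentiableWithinAt
  have huB1 : ((1 : ℂ)) * (u : ℂ) ∈ B1 := by
    simp only [hB1_def, one_mul, Metric.mem_ball, Complex.dist_eq, sub_zero]
    simpa [Complex.norm_real] using huabs
  -- relate hCg's iterated derivative to the complex one
  have hCgfun_eq : (fun v : ℝ => ((1 - v ^ 2 : ℝ) : ℂ) ^ ((k : ℂ) + γ))
      = fun v : ℝ => 1 * G (1 * v) := by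
    funext v
    simp only [hG_def, one_mul]
    congr 1
    push_cast; ring
  have hGIter : iteratedDeriv k (fun v : ℝ => ((1 - v ^ 2 : ℝ) : ℂ) ^ ((k : ℂ) + γ)) u
      = iteratedDeriv k G ((u : ℂ)) := by
    rw [hCgfun_eq]
    have := scaleIter k G B1 Metric.isOpen_ball hGan 1 1 u huB1
    simpa using this
  -- the chain along the imaginary segment
  set C₀ : ℂ := ((s ^ 2 : ℝ) : ℂ) ^ (γ + k) with hC0_def
  have e1 := scaleIter k F B Metric.isOpen_ball hFan (Complex.I * s) 1 u hP
  have e2 : (fun v : ℝ => 1 * F ((Complex.I * s) * v)) =ᶠ[nhds u]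
      fun v : ℝ => C₀ * G (1 * v) := by
    filter_upwards [isOpen_Ioo.mem_nhds hu] with v hv
    have hbase : (s : ℂ) ^ 2 + ((Complex.I * s) * v) ^ 2
        = ((s ^ 2 : ℝ) : ℂ) * ((1 - v ^ 2 : ℝ) : ℂ) := by
      push_cast
      linear_combination ((s : ℂ) ^ 2 * (v : ℂ) ^ 2) * Complex.I_mul_I
    have h1v : (0 : ℝ) ≤ 1 - v ^ 2 := by nlinarith [hv.1, hv.2]
    have hsplit := Complex.mul_cpow_ofReal_nonneg (sq_nonneg s) h1v (γ + k)
    have hGv : ((1 - v ^ 2 : ℝ) : ℂ) ^ (γ + (k : ℂ)) = G (1 * (v : ℂ)) := by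
      simp only [hG_def]
      rw [add_comm γ (k : ℂ)]
      congr 1
      push_cast; ring
    simp only [hF_def, one_mul]
    rw [hbase, hsplit, ← hC0_def, hGv]
    simp
  have e2' := e2.iteratedDeriv_eq k (x := u)
  have e3 := scaleIter k G B1 Metric.isOpen_ball hGan 1 C₀ u huB1
  -- assemble : (I s)^k * iteratedDeriv k F (I s u) = C₀ * iteratedDeriv k G u
  have hmain0 : (Complex.I * s) ^ k * iteratedDeriv k F ((Complex.I * s) * u)
      = C₀ * iteratedDeriv k G ((u : ℂ)) := by
    have h := e1
    rw [e2', e3] at h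
    have h' : (Complex.I * ↑s) ^ k * iteratedDeriv k F (Complex.I * ↑s * ↑u)
        = C₀ * iteratedDeriv k G (1 * ↑u) := by
      linear_combination (-1 : ℂ) * h
    simpa using h'
  rw [hEqOn hP] at hmain0
  -- now the algebra
  set Q : ℂ := ((1 - u ^ 2 : ℝ) : ℂ) with hQ_def
  set S : ℂ := ((s ^ 2 : ℝ) : ℂ) with hS_def
  have hQpos : (0 : ℝ) < 1 - u ^ 2 := by nlinarith [hu.1, hu.2]
  have hQne : Q ≠ 0 := by
    simp only [hQ_def, ne_eq, Complex.ofReal_eq_zero]; exact hQpos.ne'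
  have hSne : S ≠ 0 := by
    simp only [hS_def, ne_eq, Complex.ofReal_eq_zero]; positivity
  have hQγne : Q ^ γ ≠ 0 := by
    rw [Ne, Complex.cpow_eq_zero_iff]; tauto
  have hSγne : S ^ γ ≠ 0 := by
    rw [Ne, Complex.cpow_eq_zero_iff]; tauto
  have hD : iteratedDeriv k G ((u : ℂ)) = c⁻¹ * Q ^ γ * Cg.eval (u : ℂ) := by
    have h1 := hCg u hu
    rw [hGIter] at h1
    rw [h1, Complex.cpow_neg]
    field_simp
    rw [← hQ_def, mul_div_assoc, div_self hQγne, mul_one]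
  -- decompose C₀ and the base of H₂'s power
  have hC0split : C₀ = S ^ γ * ((s : ℂ) ^ 2) ^ k := by
    rw [hC0_def, Complex.cpow_add _ _ hSne, Complex.cpow_natCast]
    congr 1
    rw [hS_def]; push_cast; ring
  have hbaseP : (s : ℂ) ^ 2 + ((Complex.I * s) * u) ^ 2 = S * Q := by
    rw [hS_def, hQ_def]
    push_cast
    linear_combination ((s : ℂ) ^ 2 * (u : ℂ) ^ 2) * Complex.I_mul_I
  have hPsplit : ((s : ℂ) ^ 2 + ((Complex.I * s) * u) ^ 2) ^ γ = S ^ γ * Q ^ γ := by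
    rw [hbaseP, hS_def, hQ_def]
    exact Complex.mul_cpow_ofReal_nonneg (sq_nonneg s) hQpos.le γ
  rw [hH2_def] at hmain0
  simp only at hmain0
  rw [hPsplit, hD, hC0split] at hmain0
  -- final cancellation
  set E : ℂ := MvPolynomial.eval ![(s : ℂ), Complex.I * s * u] A with hE_def
  have hIs : Complex.I * (s : ℂ) ≠ 0 := mul_ne_zero Complex.I_ne_zero hsC
  have hpow : (Complex.I * (s : ℂ)) ^ k * ((-Complex.I) ^ k * (s : ℂ) ^ k)
      = ((s : ℂ) ^ 2) ^ k := by
    rw [← mul_pow, ← mul_pow]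
    congr 1
    linear_combination (-(s : ℂ) ^ 2) * Complex.I_mul_I
  have hcancel : E * ((Complex.I * s) ^ k * (S ^ γ * Q ^ γ))
      = (c⁻¹ * (-Complex.I) ^ k * (s : ℂ) ^ k * Cg.eval (u : ℂ))
        * ((Complex.I * s) ^ k * (S ^ γ * Q ^ γ)) := by
    calc E * ((Complex.I * s) ^ k * (S ^ γ * Q ^ γ))
        = (Complex.I * s) ^ k * (E * (S ^ γ * Q ^ γ)) := by ring
      _ = S ^ γ * ((s : ℂ) ^ 2) ^ k * (c⁻¹ * Q ^ γ * Cg.eval (u : ℂ)) := hmain0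
      _ = _ := by
          linear_combination (-(S ^ γ * c⁻¹ * Q ^ γ * Polynomial.eval ((u : ℂ)) Cg)) * hpow
  have hne2 : (Complex.I * (s : ℂ)) ^ k * (S ^ γ * Q ^ γ) ≠ 0 :=
    mul_ne_zero (pow_ne_zero _ hIs) (mul_ne_zero hSγne hQγne)
  exact mul_right_cancel₀ hne2 hcancel

/-- Extension of the key identity to all complex `t`, for real `s > 0`. -/
lemma keyA (γ : ℂ) (k : ℕ) (A : MvPolynomial (Fin 2) ℂ) (Cg : Polynomial ℂ)
    (c : ℂ) (hc : c ≠ 0)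
    (hA : ∀ s t : ℝ, 0 < s →
      iteratedDeriv k (fun u : ℝ => ((s ^ 2 + u ^ 2 : ℝ) : ℂ) ^ (γ + k)) t
        = MvPolynomial.eval ![(s : ℂ), (t : ℂ)] A * ((s ^ 2 + t ^ 2 : ℝ) : ℂ) ^ γ)
    (hCg : ∀ t ∈ Set.Ioo (-1 : ℝ) 1,
      Cg.eval (t : ℂ)
        = c * ((1 - t ^ 2 : ℝ) : ℂ) ^ (-γ) *
            iteratedDeriv k (fun u : ℝ => ((1 - u ^ 2 : ℝ) : ℂ) ^ ((k : ℂ) + γ)) t)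
    (s : ℝ) (hs : 0 < s) (t : ℂ) :
    MvPolynomial.eval ![(s : ℂ), t] A
      = c⁻¹ * (-Complex.I) ^ k * (s : ℂ) ^ k * Cg.eval (t / (Complex.I * s)) := by
  have hsC : (s : ℂ) ≠ 0 := ofReal_ne_zero.mpr hs.ne'
  have hIs : Complex.I * (s : ℂ) ≠ 0 := mul_ne_zero Complex.I_ne_zero hsC
  have hfan : AnalyticOnNhd ℂ (fun z => MvPolynomial.eval ![(s : ℂ), z] A) Set.univ :=
    ((mvdiff A (fun _ => (s : ℂ)) id (differentiable_const _)
      differentiable_id).differentiableOn).analyticOnNhd isOpen_univ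
  have hgan : AnalyticOnNhd ℂ
      (fun z => c⁻¹ * (-Complex.I) ^ k * (s : ℂ) ^ k * Cg.eval (z / (Complex.I * s)))
      Set.univ := by
    apply DifferentiableOn.analyticOnNhd _ isOpen_univ
    apply Differentiable.differentiableOn
    exact ((Cg.differentiable).comp (differentiable_id.div_const _)).const_mul _
  have hEqOn := hfan.eqOn_of_preconnected_of_frequently_eq hgan isPreconnected_univ
    (Set.mem_univ (0 : ℂ)) ?_
  · simpa using hEqOn (Set.mem_univ t)
  · apply freqHelp (fun n : ℕ => (Complex.I * s) * ((1 / (n + 2) : ℝ) : ℂ))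
    · have h1 := tendsto_aux.ofReal
      simpa using h1.const_mul (Complex.I * (s : ℂ))
    · intro n
      have h0 : (0 : ℝ) < 1 / (n + 2) := by positivity
      exact mul_ne_zero hIs (ofReal_ne_zero.mpr h0.ne')
    · intro n
      have h0 : (0 : ℝ) < 1 / ((n : ℝ) + 2) := by positivity
      have h2 : (1 : ℝ) / ((n : ℝ) + 2) < 1 := by
        rw [div_lt_one (by positivity)]; linarith [Nat.cast_nonneg (α := ℝ) n]
      have hun : (1 / (n + 2) : ℝ) ∈ Set.Ioo (-1 : ℝ) 1 := ⟨by linarith, h2⟩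
      have h1 := keyLemma γ k A Cg rfl c hc hA hCg s hs _ hun
      show MvPolynomial.eval ![(s : ℂ), (Complex.I * s) * ((1 / (n + 2) : ℝ) : ℂ)] A
        = c⁻¹ * (-Complex.I) ^ k * (s : ℂ) ^ k *
            Cg.eval ((Complex.I * s) * ((1 / (n + 2) : ℝ) : ℂ) / (Complex.I * s))
      rw [mul_div_cancel_left₀ _ hIs]
      exact h1

theorem stmt7' (γ : ℂ) (k : ℕ) (A : MvPolynomial (Fin 2) ℂ) (Cg : Polynomial ℂ)
    (c : ℂ) (hc : c ≠ 0)
    (hA : ∀ s t : ℝ, 0 < s →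
      iteratedDeriv k (fun u : ℝ => ((s ^ 2 + u ^ 2 : ℝ) : ℂ) ^ (γ + k)) t
        = MvPolynomial.eval ![(s : ℂ), (t : ℂ)] A * ((s ^ 2 + t ^ 2 : ℝ) : ℂ) ^ γ)
    (hCg : ∀ t ∈ Set.Ioo (-1 : ℝ) 1,
      Cg.eval (t : ℂ)
        = c * ((1 - t ^ 2 : ℝ) : ℂ) ^ (-γ) *
            iteratedDeriv k (fun u : ℝ => ((1 - u ^ 2 : ℝ) : ℂ) ^ ((k : ℂ) + γ)) t) :
    ∀ s t : ℂ, s ≠ 0 →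
      MvPolynomial.eval ![s, t] A
        = c⁻¹ * (-Complex.I) ^ k * s ^ k * Cg.eval (t / (Complex.I * s)) := by
  intro s t hs
  have hfan : AnalyticOnNhd ℂ (fun z => MvPolynomial.eval ![z, t] A) {(0 : ℂ)}ᶜ :=
    ((mvdiff A id (fun _ => t) differentiable_id
      (differentiable_const _)).differentiableOn).analyticOnNhd isOpen_compl_singleton
  have hgan : AnalyticOnNhd ℂ
      (fun z => c⁻¹ * (-Complex.I) ^ k * z ^ k * Cg.eval (t / (Complex.I * z)))
      {(0 : ℂ)}ᶜ := by
    apply DifferentiableOn.analyticOnNhd _ isOpen_compl_singleton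
    intro z hz
    have hz0 : z ≠ 0 := hz
    have hdiv : DifferentiableAt ℂ (fun z => t / (Complex.I * z)) z :=
      (differentiableAt_const t).div ((differentiableAt_const Complex.I).mul
        differentiableAt_id) (mul_ne_zero Complex.I_ne_zero hz0)
    have hpol : DifferentiableAt ℂ (fun z => Cg.eval (t / (Complex.I * z))) z :=
      (Cg.differentiableAt).comp z hdiv
    exact (((differentiableAt_pow k).const_mul _).mul hpol).differentiableWithinAt
  have hprec : IsPreconnected ({(0 : ℂ)}ᶜ : Set ℂ) :=
    (isConnected_compl_singleton_of_one_lt_rank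
      (by rw [rank_real_complex]; norm_num) (0 : ℂ)).isPreconnected
  have hEqOn := hfan.eqOn_of_preconnected_of_frequently_eq hgan hprec
    (z₀ := 1) (Set.mem_compl_singleton_iff.mpr one_ne_zero) ?_
  · simpa using hEqOn (Set.mem_compl_singleton_iff.mpr hs)
  · apply freqHelp (fun n : ℕ => ((1 + 1 / (n + 2) : ℝ) : ℂ))
    · have h1 : Filter.Tendsto (fun n : ℕ => (1 + 1 / (n + 2) : ℝ)) Filter.atTop
          (nhds (1 + 0)) := tendsto_const_nhds.add tendsto_aux
      simpa using h1.ofReal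
    · intro n
      have h0 : (0 : ℝ) < 1 / ((n : ℝ) + 2) := by positivity
      have h1 : (1 : ℝ) < 1 + 1 / ((n : ℝ) + 2) := by linarith
      intro hcon
      exact h1.ne' (by exact_mod_cast hcon)
    · intro n
      have h0 : (0 : ℝ) < 1 / ((n : ℝ) + 2) := by positivity
      exact keyA γ k A Cg c hc hA hCg _ (by linarith) t


end Helpers

theorem stmt7 (γ : ℂ) (k : ℕ) (A : MvPolynomial (Fin 2) ℂ) (Cg : Polynomial ℂ)
    (hck : ckG k (γ + 1 / 2) ≠ 0)
    -- `A = A_k^γ` : the two-variable Rodrigues-type formula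
    (hA : ∀ s t : ℝ, 0 < s →
      iteratedDeriv k (fun u : ℝ => ((s ^ 2 + u ^ 2 : ℝ) : ℂ) ^ (γ + k)) t
        = MvPolynomial.eval ![(s : ℂ), (t : ℂ)] A * ((s ^ 2 + t ^ 2 : ℝ) : ℂ) ^ γ)
    -- `Cg = C_k^λ` with `λ = γ + 1/2` : the Gegenbauer Rodrigues formula
    (hCg : ∀ t ∈ Set.Ioo (-1 : ℝ) 1,
      Cg.eval (t : ℂ)
        = ckG k (γ + 1 / 2) * ((1 - t ^ 2 : ℝ) : ℂ) ^ (-γ) *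
            iteratedDeriv k (fun u : ℝ => ((1 - u ^ 2 : ℝ) : ℂ) ^ ((k : ℂ) + γ)) t) :
    ∀ s t : ℂ, s ≠ 0 →
      MvPolynomial.eval ![s, t] A
        = (ckG k (γ + 1 / 2))⁻¹ * (-Complex.I) ^ k * s ^ k *
            Cg.eval (t / (Complex.I * s)) :=
  stmt7' γ k A Cg (ckG k (γ + 1 / 2)) hck hA hCg
end

section
/- Let q(∂) = Σ_{j=1}^n (∂/∂ξ_j - ∂/∂η_j)² acting on functions on ℝ^n × ℝ^n. For α, β ∈ ℂ and every natural number k, there exists a polynomial p_k^{α,β}(ξ,η), homogeneous of degree 2k, such that q(∂)^k (|ξ|^{2(α+k)} |η|^{2(β+k)}) = p_k^{α,β}(ξ,η) |ξ|^{2α} |η|^{2β} on {ξ ≠ 0, η ≠ 0}, with p_0^{α,β} = 1. -/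
open MvPolynomial Complex

/-- Partial derivative in the `i`-th coordinate of the first variable. -/
noncomputable def pd1 {m : ℕ} (i : Fin m) (f : (Fin m → ℝ) → (Fin m → ℝ) → ℂ) :
    (Fin m → ℝ) → (Fin m → ℝ) → ℂ :=
  fun ξ η => deriv (fun t => f (Function.update ξ i t) η) (ξ i)

/-- Partial derivative in the `i`-th coordinate of the second variable. -/
noncomputable def pd2 {m : ℕ} (i : Fin m) (f : (Fin m → ℝ) → (Fin m → ℝ) → ℂ) :
    (Fin m → ℝ) → (Fin m → ℝ) → ℂ :=
  fun ξ η => deriv (fun t => f ξ (Function.update η i t)) (η i)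

/-- The operator `∂/∂ξ_i − ∂/∂η_i`. -/
noncomputable def Dj {m : ℕ} (i : Fin m) (f : (Fin m → ℝ) → (Fin m → ℝ) → ℂ) :
    (Fin m → ℝ) → (Fin m → ℝ) → ℂ :=
  fun ξ η => pd1 i f ξ η - pd2 i f ξ η

/-- The difference Laplacian `q(∂) = Σ_j (∂/∂ξ_j − ∂/∂η_j)²`. -/
noncomputable def Qop {m : ℕ} (f : (Fin m → ℝ) → (Fin m → ℝ) → ℂ) :
    (Fin m → ℝ) → (Fin m → ℝ) → ℂ :=
  fun ξ η => ∑ i, Dj i (Dj i f) ξ η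



section Aux

variable {n : ℕ}

/-- squared norm as a complex number -/
noncomputable def Rsq (u : Fin n → ℝ) : ℂ := ((∑ j, u j ^ 2 : ℝ) : ℂ)

/-- evaluation of a polynomial at `(ξ, η)` -/
noncomputable def ev (ξ η : Fin n → ℝ) (p : MvPolynomial (Fin n ⊕ Fin n) ℂ) : ℂ :=
  eval (Sum.elim (fun j => (ξ j : ℂ)) (fun j => (η j : ℂ))) p

/-- the basic family of functions -/
noncomputable def FF (p : MvPolynomial (Fin n ⊕ Fin n) ℂ) (a b : ℂ) :
    (Fin n → ℝ) → (Fin n → ℝ) → ℂ :=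
  fun ξ η => ev ξ η p * Rsq ξ ^ a * Rsq η ^ b

noncomputable def Rp (n : ℕ) : MvPolynomial (Fin n ⊕ Fin n) ℂ := ∑ j, X (Sum.inl j) ^ 2
noncomputable def Sp (n : ℕ) : MvPolynomial (Fin n ⊕ Fin n) ℂ := ∑ j, X (Sum.inr j) ^ 2
noncomputable def Ap (i : Fin n) (p : MvPolynomial (Fin n ⊕ Fin n) ℂ) :
    MvPolynomial (Fin n ⊕ Fin n) ℂ :=
  pderiv (Sum.inl i) p - pderiv (Sum.inr i) p

lemma sum_sq_pos {ξ : Fin n → ℝ} (hξ : ξ ≠ 0) : 0 < ∑ j, ξ j ^ 2 := by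
  obtain ⟨j, hj⟩ := Function.ne_iff.mp hξ
  have hj' : ξ j ≠ 0 := by simpa using hj
  exact Finset.sum_pos' (fun i _ => sq_nonneg _)
    ⟨j, Finset.mem_univ j, by positivity⟩

lemma Rsq_slit {ξ : Fin n → ℝ} (hξ : ξ ≠ 0) : Rsq ξ ∈ Complex.slitPlane := by
  rw [Complex.mem_slitPlane_iff]
  left
  rw [Rsq, Complex.ofReal_re]
  exact sum_sq_pos hξ

lemma Rsq_ne {ξ : Fin n → ℝ} (hξ : ξ ≠ 0) : Rsq ξ ≠ 0 := by
  simp only [Rsq, ne_eq, Complex.ofReal_eq_zero]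
  exact (sum_sq_pos hξ).ne'

lemma ev_Rp (ξ η : Fin n → ℝ) : ev ξ η (Rp n) = Rsq ξ := by
  simp [ev, Rp, Rsq, Complex.ofReal_sum]

lemma ev_Sp (ξ η : Fin n → ℝ) : ev ξ η (Sp n) = Rsq η := by
  simp [ev, Sp, Rsq, Complex.ofReal_sum]

lemma cpow_lower {x : ℂ} (hx : x ≠ 0) (c : ℂ) : x ^ c = x ^ (c - 1) * x := by
  conv_lhs => rw [show c = (c - 1) + 1 by ring, Complex.cpow_add _ _ hx, Complex.cpow_one]

lemma FF_poly_congr {p q : MvPolynomial (Fin n ⊕ Fin n) ℂ} (h : p = q) (a b : ℂ)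
    (ξ η : Fin n → ℝ) : FF p a b ξ η = FF q a b ξ η := by rw [h]

lemma FF_exp_congr (p : MvPolynomial (Fin n ⊕ Fin n) ℂ) {a b a' b' : ℂ} (h1 : a = a')
    (h2 : b = b') (ξ η : Fin n → ℝ) : FF p a b ξ η = FF p a' b' ξ η := by rw [h1, h2]

lemma FF_lower1 {ξ η : Fin n → ℝ} (hξ : ξ ≠ 0) (q : MvPolynomial (Fin n ⊕ Fin n) ℂ)
    (c d : ℂ) : FF (Rp n * q) (c - 1) d ξ η = FF q c d ξ η := by
  simp only [FF, ev, map_mul]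
  rw [show MvPolynomial.eval _ (Rp n) = Rsq ξ from ev_Rp ξ η, cpow_lower (Rsq_ne hξ) c]
  ring

lemma FF_lower2 {ξ η : Fin n → ℝ} (hη : η ≠ 0) (q : MvPolynomial (Fin n ⊕ Fin n) ℂ)
    (c d : ℂ) : FF (Sp n * q) c (d - 1) ξ η = FF q c d ξ η := by
  simp only [FF, ev, map_mul]
  rw [show MvPolynomial.eval _ (Sp n) = Rsq η from ev_Sp ξ η, cpow_lower (Rsq_ne hη) d]
  ring

lemma FF_add (p q : MvPolynomial (Fin n ⊕ Fin n) ℂ) (a b : ℂ) (ξ η : Fin n → ℝ) :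
    FF (p + q) a b ξ η = FF p a b ξ η + FF q a b ξ η := by
  simp only [FF, ev, map_add]; ring

lemma FF_sub (p q : MvPolynomial (Fin n ⊕ Fin n) ℂ) (a b : ℂ) (ξ η : Fin n → ℝ) :
    FF (p - q) a b ξ η = FF p a b ξ η - FF q a b ξ η := by
  simp only [FF, ev, map_sub]; ring

lemma FF_sum {m : Type*} (s : Finset m) (f : m → MvPolynomial (Fin n ⊕ Fin n) ℂ)
    (a b : ℂ) (ξ η : Fin n → ℝ) :
    ∑ i ∈ s, FF (f i) a b ξ η = FF (∑ i ∈ s, f i) a b ξ η := by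
  simp only [FF, ev, map_sum]
  rw [Finset.sum_mul, Finset.sum_mul]

lemma FF_CX1 (c : ℂ) (i : Fin n) (p : MvPolynomial (Fin n ⊕ Fin n) ℂ) (a b : ℂ)
    (ξ η : Fin n → ℝ) :
    FF (C c * X (Sum.inl i) * p) a b ξ η = c * (ξ i : ℂ) * FF p a b ξ η := by
  simp only [FF, ev, map_mul, eval_C, eval_X, Sum.elim_inl]; ring

lemma FF_CX2 (c : ℂ) (i : Fin n) (p : MvPolynomial (Fin n ⊕ Fin n) ℂ) (a b : ℂ)
    (ξ η : Fin n → ℝ) :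
    FF (C c * X (Sum.inr i) * p) a b ξ η = c * (η i : ℂ) * FF p a b ξ η := by
  simp only [FF, ev, map_mul, eval_C, eval_X, Sum.elim_inr]; ring




lemma hasDerivAt_eval_update_s14 {σ : Type*} [DecidableEq σ] (p : MvPolynomial σ ℂ) (v : σ → ℂ) (s : σ) :
    HasDerivAt (fun t : ℂ => eval (Function.update v s t) p) (eval v (pderiv s p)) (v s) := by
  induction p using MvPolynomial.induction_on with
  | C c =>
      simp only [eval_C, pderiv_C, map_zero]
      exact hasDerivAt_const _ _
  | add p q hp hq =>
      simp only [map_add]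
      exact hp.add hq
  | mul_X p s' hp =>
      have key : ∀ t : ℂ, eval (Function.update v s t) (p * X s')
          = eval (Function.update v s t) p * (if s' = s then t else v s') := by
        intro t
        simp [Function.update_apply]
      simp only [key]
      by_cases h : s' = s
      · subst h
        have := hp.mul (hasDerivAt_id (v s'))
        simp only [if_pos rfl]
        refine this.congr_deriv ?_
        simp [pderiv_mul, pderiv_X_self, Function.update_eq_self]
        ring
      · simp only [if_neg h]
        have := hp.mul_const (v s')
        refine this.congr_deriv ?_
        rw [pderiv_mul, pderiv_X_of_ne h]
        simp [Function.update_eq_self]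

section B
variable {n : ℕ}

lemma update_elim1 (ξ η : Fin n → ℝ) (i : Fin n) (t : ℝ) :
    (Sum.elim (fun j => ((Function.update ξ i t) j : ℂ)) (fun j => (η j : ℂ)))
      = Function.update (Sum.elim (fun j => (ξ j : ℂ)) (fun j => (η j : ℂ)))
          (Sum.inl i) (t : ℂ) := by
  funext x
  cases x with
  | inl j =>
      simp only [Sum.elim_inl, Function.update_apply]
      by_cases h : j = i
      · subst h; simp
      · simp [h, Sum.inl.injEq]
  | inr j =>
      simp [Function.update_apply]

lemma update_elim2 (ξ η : Fin n → ℝ) (i : Fin n) (t : ℝ) :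
    (Sum.elim (fun j => (ξ j : ℂ)) (fun j => ((Function.update η i t) j : ℂ)))
      = Function.update (Sum.elim (fun j => (ξ j : ℂ)) (fun j => (η j : ℂ)))
          (Sum.inr i) (t : ℂ) := by
  funext x
  cases x with
  | inl j => simp [Function.update_apply]
  | inr j =>
      simp only [Sum.elim_inr, Function.update_apply]
      by_cases h : j = i
      · subst h; simp
      · simp [h, Sum.inr.injEq]

lemma hasDerivAt_ev1 (p : MvPolynomial (Fin n ⊕ Fin n) ℂ) (ξ η : Fin n → ℝ) (i : Fin n) :
    HasDerivAt (fun t : ℝ => ev (Function.update ξ i t) η p)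
      (ev ξ η (pderiv (Sum.inl i) p)) (ξ i) := by
  have h := (hasDerivAt_eval_update_s14 p
      (Sum.elim (fun j => ((ξ j : ℂ))) (fun j => (η j : ℂ))) (Sum.inl i)).comp_ofReal
      (z := ξ i)
  convert h using 2 with t
  rw [ev, update_elim1]
  rfl

lemma hasDerivAt_ev2 (p : MvPolynomial (Fin n ⊕ Fin n) ℂ) (ξ η : Fin n → ℝ) (i : Fin n) :
    HasDerivAt (fun t : ℝ => ev ξ (Function.update η i t) p)
      (ev ξ η (pderiv (Sum.inr i) p)) (η i) := by
  have h := (hasDerivAt_eval_update_s14 p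
      (Sum.elim (fun j => ((ξ j : ℂ))) (fun j => (η j : ℂ))) (Sum.inr i)).comp_ofReal
      (z := η i)
  convert h using 2 with t
  rw [ev, update_elim2]
  rfl

lemma hasDerivAt_sumsq (ξ : Fin n → ℝ) (i : Fin n) :
    HasDerivAt (fun t : ℝ => ∑ j, (Function.update ξ i t j) ^ 2) (2 * ξ i) (ξ i) := by
  have key : ∀ t : ℝ, ∑ j, (Function.update ξ i t j) ^ 2
      = t ^ 2 + ∑ j ∈ Finset.univ \ {i}, ξ j ^ 2 := by
    intro t
    rw [show (fun j => Function.update ξ i t j ^ 2)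
        = Function.update (fun j => ξ j ^ 2) i (t ^ 2) from
      funext fun j => Function.apply_update (fun _ x => x ^ 2) ξ i t j]
    simpa using Finset.sum_update_of_mem (Finset.mem_univ i) (fun j => ξ j ^ 2) (t ^ 2)
  simp only [key]
  simpa using (hasDerivAt_pow 2 (ξ i)).add_const (∑ j ∈ Finset.univ \ {i}, ξ j ^ 2)

lemma hasDerivAt_Rpow1 (a : ℂ) (ξ : Fin n → ℝ) (i : Fin n) (hξ : ξ ≠ 0) :
    HasDerivAt (fun t : ℝ => Rsq (Function.update ξ i t) ^ a)
      (a * Rsq ξ ^ (a - 1) * (2 * (ξ i : ℂ))) (ξ i) := by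
  have h0 : Rsq ξ ∈ Complex.slitPlane := Rsq_slit hξ
  have h1 : HasDerivAt (fun z : ℂ => z ^ a) (a * Rsq ξ ^ (a - 1)) (Rsq ξ) :=
    (Complex.hasStrictDerivAt_cpow_const h0).hasDerivAt
  have h2 : HasDerivAt (fun t : ℝ => Rsq (Function.update ξ i t)) ((2 * ξ i : ℝ) : ℂ) (ξ i) := by
    have := (hasDerivAt_sumsq ξ i).ofReal_comp
    simpa [Rsq] using this
  have h1' : HasDerivAt (fun z : ℂ => z ^ a) (a * Rsq ξ ^ (a - 1))
      (Rsq (Function.update ξ i (ξ i))) := by rwa [Function.update_eq_self]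
  have h3 := h1'.comp (ξ i) h2
  simp only [Function.comp_def] at h3
  refine h3.congr_deriv ?_
  push_cast
  ring

section C
variable {n : ℕ}

lemma hasDerivAt_FF1 (p : MvPolynomial (Fin n ⊕ Fin n) ℂ) (a b : ℂ) (ξ η : Fin n → ℝ)
    (i : Fin n) (hξ : ξ ≠ 0) :
    HasDerivAt (fun t : ℝ => FF p a b (Function.update ξ i t) η)
      (FF (pderiv (Sum.inl i) p) a b ξ η + 2 * a * (ξ i : ℂ) * FF p (a - 1) b ξ η) (ξ i) := by
  have h := ((hasDerivAt_ev1 p ξ η i).mul (hasDerivAt_Rpow1 a ξ i hξ)).mul_const (Rsq η ^ b)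
  simp only [Function.update_eq_self] at h
  unfold FF
  refine h.congr_deriv ?_
  ring

lemma hasDerivAt_FF2 (p : MvPolynomial (Fin n ⊕ Fin n) ℂ) (a b : ℂ) (ξ η : Fin n → ℝ)
    (i : Fin n) (hη : η ≠ 0) :
    HasDerivAt (fun t : ℝ => FF p a b ξ (Function.update η i t))
      (FF (pderiv (Sum.inr i) p) a b ξ η + 2 * b * (η i : ℂ) * FF p a (b - 1) ξ η) (η i) := by
  have h := (((hasDerivAt_ev2 p ξ η i).mul_const (Rsq ξ ^ a)).mul
      (hasDerivAt_Rpow1 b η i hη))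
  simp only [Function.update_eq_self] at h
  unfold FF
  refine h.congr_deriv ?_
  ring

lemma pd1_FF (p : MvPolynomial (Fin n ⊕ Fin n) ℂ) (a b : ℂ) {ξ η : Fin n → ℝ}
    (i : Fin n) (hξ : ξ ≠ 0) :
    pd1 i (FF p a b) ξ η = FF (pderiv (Sum.inl i) p) a b ξ η
      + FF (C (2 * a) * X (Sum.inl i) * p) (a - 1) b ξ η := by
  rw [show pd1 i (FF p a b) ξ η = deriv (fun t => FF p a b (Function.update ξ i t) η) (ξ i)
    from rfl, (hasDerivAt_FF1 p a b ξ η i hξ).deriv, FF_CX1]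

lemma pd2_FF (p : MvPolynomial (Fin n ⊕ Fin n) ℂ) (a b : ℂ) {ξ η : Fin n → ℝ}
    (i : Fin n) (hη : η ≠ 0) :
    pd2 i (FF p a b) ξ η = FF (pderiv (Sum.inr i) p) a b ξ η
      + FF (C (2 * b) * X (Sum.inr i) * p) a (b - 1) ξ η := by
  rw [show pd2 i (FF p a b) ξ η = deriv (fun t => FF p a b ξ (Function.update η i t)) (η i)
    from rfl, (hasDerivAt_FF2 p a b ξ η i hη).deriv, FF_CX2]

lemma Dj_FF (p : MvPolynomial (Fin n ⊕ Fin n) ℂ) (a b : ℂ) {ξ η : Fin n → ℝ}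
    (i : Fin n) (hξ : ξ ≠ 0) (hη : η ≠ 0) :
    Dj i (FF p a b) ξ η = FF (Ap i p) a b ξ η
      + FF (C (2 * a) * X (Sum.inl i) * p) (a - 1) b ξ η
      - FF (C (2 * b) * X (Sum.inr i) * p) a (b - 1) ξ η := by
  rw [show Dj i (FF p a b) ξ η = pd1 i (FF p a b) ξ η - pd2 i (FF p a b) ξ η from rfl,
    pd1_FF p a b i hξ, pd2_FF p a b i hη, Ap, FF_sub]
  ring

lemma eventually_update_ne {ξ : Fin n → ℝ} (hξ : ξ ≠ 0) (i : Fin n) :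
    ∀ᶠ t in nhds (ξ i), Function.update ξ i t ≠ 0 := by
  have hc : Continuous fun t : ℝ => Function.update ξ i t := by
    apply continuous_pi; intro j
    simp only [Function.update_apply]
    by_cases h : j = i
    · simp only [h, if_pos rfl]; exact continuous_id
    · simp only [h, if_neg h]; exact continuous_const
  have hopen : IsOpen {u : Fin n → ℝ | u ≠ 0} := isOpen_ne
  refine Filter.eventually_of_mem ((hopen.preimage hc).mem_nhds ?_) (fun t ht => ht)
  simpa [Function.update_eq_self] using hξ

lemma pd1_congr {f g : (Fin n → ℝ) → (Fin n → ℝ) → ℂ}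
    (h : ∀ ξ' η', ξ' ≠ 0 → η' ≠ 0 → f ξ' η' = g ξ' η') {ξ η : Fin n → ℝ}
    (hξ : ξ ≠ 0) (hη : η ≠ 0) (i : Fin n) : pd1 i f ξ η = pd1 i g ξ η := by
  apply Filter.EventuallyEq.deriv_eq
  filter_upwards [eventually_update_ne hξ i] with t ht
  exact h _ _ ht hη

lemma pd2_congr {f g : (Fin n → ℝ) → (Fin n → ℝ) → ℂ}
    (h : ∀ ξ' η', ξ' ≠ 0 → η' ≠ 0 → f ξ' η' = g ξ' η') {ξ η : Fin n → ℝ}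
    (hξ : ξ ≠ 0) (hη : η ≠ 0) (i : Fin n) : pd2 i f ξ η = pd2 i g ξ η := by
  apply Filter.EventuallyEq.deriv_eq
  filter_upwards [eventually_update_ne hη i] with t ht
  exact h _ _ hξ ht

lemma Dj_congr {f g : (Fin n → ℝ) → (Fin n → ℝ) → ℂ}
    (h : ∀ ξ' η', ξ' ≠ 0 → η' ≠ 0 → f ξ' η' = g ξ' η') {ξ η : Fin n → ℝ}
    (hξ : ξ ≠ 0) (hη : η ≠ 0) (i : Fin n) : Dj i f ξ η = Dj i g ξ η := by
  rw [show Dj i f ξ η = pd1 i f ξ η - pd2 i f ξ η from rfl,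
    show Dj i g ξ η = pd1 i g ξ η - pd2 i g ξ η from rfl,
    pd1_congr h hξ hη i, pd2_congr h hξ hη i]

lemma Qop_congr {f g : (Fin n → ℝ) → (Fin n → ℝ) → ℂ}
    (h : ∀ ξ' η', ξ' ≠ 0 → η' ≠ 0 → f ξ' η' = g ξ' η') {ξ η : Fin n → ℝ}
    (hξ : ξ ≠ 0) (hη : η ≠ 0) : Qop f ξ η = Qop g ξ η := by
  rw [show Qop f ξ η = ∑ i, Dj i (Dj i f) ξ η from rfl,
    show Qop g ξ η = ∑ i, Dj i (Dj i g) ξ η from rfl]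
  refine Finset.sum_congr rfl fun i _ => ?_
  exact Dj_congr (fun ξ' η' h1 h2 => Dj_congr h h1 h2 i) hξ hη i

end C

end B

section D
variable {n : ℕ}

lemma DjDj_FF (p : MvPolynomial (Fin n ⊕ Fin n) ℂ) (a b : ℂ) {ξ η : Fin n → ℝ}
    (i : Fin n) (hξ : ξ ≠ 0) (hη : η ≠ 0) :
    Dj i (Dj i (FF p a b)) ξ η =
      FF (Ap i (Ap i p)) a b ξ η
      + FF (C (2*a) * X (Sum.inl i) * Ap i p) (a-1) b ξ η
      - FF (C (2*b) * X (Sum.inr i) * Ap i p) a (b-1) ξ η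
      + FF (Ap i (C (2*a) * X (Sum.inl i) * p)) (a-1) b ξ η
      + FF (C (2*(a-1)) * X (Sum.inl i) * (C (2*a) * X (Sum.inl i) * p)) (a-1-1) b ξ η
      - FF (C (2*b) * X (Sum.inr i) * (C (2*a) * X (Sum.inl i) * p)) (a-1) (b-1) ξ η
      - FF (Ap i (C (2*b) * X (Sum.inr i) * p)) a (b-1) ξ η
      - FF (C (2*a) * X (Sum.inl i) * (C (2*b) * X (Sum.inr i) * p)) (a-1) (b-1) ξ η
      + FF (C (2*(b-1)) * X (Sum.inr i) * (C (2*b) * X (Sum.inr i) * p)) a (b-1-1) ξ η := by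
  have hG : ∀ ξ' η', ξ' ≠ 0 → η' ≠ 0 → Dj i (FF p a b) ξ' η'
      = (fun ξ'' η'' => FF (Ap i p) a b ξ'' η''
          + FF (C (2*a) * X (Sum.inl i) * p) (a-1) b ξ'' η''
          - FF (C (2*b) * X (Sum.inr i) * p) a (b-1) ξ'' η'') ξ' η' :=
    fun ξ' η' h1 h2 => Dj_FF p a b i h1 h2
  rw [Dj_congr hG hξ hη i]
  have h1 := ((hasDerivAt_FF1 (Ap i p) a b ξ η i hξ).add
      (hasDerivAt_FF1 (C (2*a) * X (Sum.inl i) * p) (a-1) b ξ η i hξ)).sub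
      (hasDerivAt_FF1 (C (2*b) * X (Sum.inr i) * p) a (b-1) ξ η i hξ)
  have h2 := ((hasDerivAt_FF2 (Ap i p) a b ξ η i hη).add
      (hasDerivAt_FF2 (C (2*a) * X (Sum.inl i) * p) (a-1) b ξ η i hη)).sub
      (hasDerivAt_FF2 (C (2*b) * X (Sum.inr i) * p) a (b-1) ξ η i hη)
  have key : Dj i (fun ξ'' η'' => FF (Ap i p) a b ξ'' η''
          + FF (C (2*a) * X (Sum.inl i) * p) (a-1) b ξ'' η''
          - FF (C (2*b) * X (Sum.inr i) * p) a (b-1) ξ'' η'') ξ η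
      = deriv (fun t => FF (Ap i p) a b (Function.update ξ i t) η
          + FF (C (2*a) * X (Sum.inl i) * p) (a-1) b (Function.update ξ i t) η
          - FF (C (2*b) * X (Sum.inr i) * p) a (b-1) (Function.update ξ i t) η) (ξ i)
        - deriv (fun t => FF (Ap i p) a b ξ (Function.update η i t)
          + FF (C (2*a) * X (Sum.inl i) * p) (a-1) b ξ (Function.update η i t)
          - FF (C (2*b) * X (Sum.inr i) * p) a (b-1) ξ (Function.update η i t)) (η i) := rfl
  simp only [Pi.add_def, Pi.sub_def] at h1 h2
  rw [key, h1.deriv, h2.deriv]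
  simp only [Ap, map_sub, FF_sub, FF_CX1, FF_CX2]
  ring

/-- the per-index polynomial produced by `Dⱼ²` applied to `FF p a b`, written at
exponents `(a-2, b-2)`. -/
noncomputable def psi (a b : ℂ) (i : Fin n) (p : MvPolynomial (Fin n ⊕ Fin n) ℂ) :
    MvPolynomial (Fin n ⊕ Fin n) ℂ :=
  Rp n * (Sp n * (Rp n * (Sp n * Ap i (Ap i p))))
  + Rp n * (Sp n * (Sp n * (C (2*a) * X (Sum.inl i) * Ap i p)))
  - Rp n * (Rp n * (Sp n * (C (2*b) * X (Sum.inr i) * Ap i p)))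
  + Rp n * (Sp n * (Sp n * Ap i (C (2*a) * X (Sum.inl i) * p)))
  + Sp n * (Sp n * (C (2*(a-1)) * X (Sum.inl i) * (C (2*a) * X (Sum.inl i) * p)))
  - Rp n * (Sp n * (C (2*b) * X (Sum.inr i) * (C (2*a) * X (Sum.inl i) * p)))
  - Rp n * (Rp n * (Sp n * Ap i (C (2*b) * X (Sum.inr i) * p)))
  - Rp n * (Sp n * (C (2*a) * X (Sum.inl i) * (C (2*b) * X (Sum.inr i) * p)))
  + Rp n * (Rp n * (C (2*(b-1)) * X (Sum.inr i) * (C (2*b) * X (Sum.inr i) * p)))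

lemma shift_ab {ξ η : Fin n → ℝ} (hξ : ξ ≠ 0) (hη : η ≠ 0)
    (q : MvPolynomial (Fin n ⊕ Fin n) ℂ) (a b : ℂ) :
    FF q a b ξ η = FF (Rp n * (Sp n * (Rp n * (Sp n * q)))) (a-1-1) (b-1-1) ξ η := by
  rw [FF_lower1 hξ, FF_lower2 hη, FF_lower1 hξ, FF_lower2 hη]

lemma shift_a1b {ξ η : Fin n → ℝ} (hξ : ξ ≠ 0) (hη : η ≠ 0)
    (q : MvPolynomial (Fin n ⊕ Fin n) ℂ) (a b : ℂ) :
    FF q (a-1) b ξ η = FF (Rp n * (Sp n * (Sp n * q))) (a-1-1) (b-1-1) ξ η := by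
  rw [FF_lower1 hξ, FF_lower2 hη, FF_lower2 hη]

lemma shift_ab1 {ξ η : Fin n → ℝ} (hξ : ξ ≠ 0) (hη : η ≠ 0)
    (q : MvPolynomial (Fin n ⊕ Fin n) ℂ) (a b : ℂ) :
    FF q a (b-1) ξ η = FF (Rp n * (Rp n * (Sp n * q))) (a-1-1) (b-1-1) ξ η := by
  rw [FF_lower1 hξ, FF_lower1 hξ, FF_lower2 hη]

lemma shift_a1b1 {ξ η : Fin n → ℝ} (hξ : ξ ≠ 0) (hη : η ≠ 0)
    (q : MvPolynomial (Fin n ⊕ Fin n) ℂ) (a b : ℂ) :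
    FF q (a-1) (b-1) ξ η = FF (Rp n * (Sp n * q)) (a-1-1) (b-1-1) ξ η := by
  rw [FF_lower1 hξ, FF_lower2 hη]

lemma shift_a2b {ξ η : Fin n → ℝ} (hη : η ≠ 0)
    (q : MvPolynomial (Fin n ⊕ Fin n) ℂ) (a b : ℂ) :
    FF q (a-1-1) b ξ η = FF (Sp n * (Sp n * q)) (a-1-1) (b-1-1) ξ η := by
  rw [FF_lower2 hη, FF_lower2 hη]

lemma shift_ab2 {ξ η : Fin n → ℝ} (hξ : ξ ≠ 0)
    (q : MvPolynomial (Fin n ⊕ Fin n) ℂ) (a b : ℂ) :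
    FF q a (b-1-1) ξ η = FF (Rp n * (Rp n * q)) (a-1-1) (b-1-1) ξ η := by
  rw [FF_lower1 hξ, FF_lower1 hξ]

lemma DjDj_FF' (p : MvPolynomial (Fin n ⊕ Fin n) ℂ) (a b : ℂ) {ξ η : Fin n → ℝ}
    (i : Fin n) (hξ : ξ ≠ 0) (hη : η ≠ 0) :
    Dj i (Dj i (FF p a b)) ξ η = FF (psi a b i p) (a-1-1) (b-1-1) ξ η := by
  rw [DjDj_FF p a b i hξ hη,
    shift_ab hξ hη (Ap i (Ap i p)) a b,
    shift_a1b hξ hη (C (2*a) * X (Sum.inl i) * Ap i p) a b,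
    shift_ab1 hξ hη (C (2*b) * X (Sum.inr i) * Ap i p) a b,
    shift_a1b hξ hη (Ap i (C (2*a) * X (Sum.inl i) * p)) a b,
    shift_a2b hη (C (2*(a-1)) * X (Sum.inl i) * (C (2*a) * X (Sum.inl i) * p)) a b,
    shift_a1b1 hξ hη (C (2*b) * X (Sum.inr i) * (C (2*a) * X (Sum.inl i) * p)) a b,
    shift_ab1 hξ hη (Ap i (C (2*b) * X (Sum.inr i) * p)) a b,
    shift_a1b1 hξ hη (C (2*a) * X (Sum.inl i) * (C (2*b) * X (Sum.inr i) * p)) a b,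
    shift_ab2 hξ (C (2*(b-1)) * X (Sum.inr i) * (C (2*b) * X (Sum.inr i) * p)) a b]
  simp only [psi, FF_add, FF_sub]

/-- the polynomial produced by one application of `Qop`. -/
noncomputable def Phi (a b : ℂ) (p : MvPolynomial (Fin n ⊕ Fin n) ℂ) :
    MvPolynomial (Fin n ⊕ Fin n) ℂ :=
  Rp n * Sp n * (∑ i, Ap i (Ap i p))
  + Sp n * (∑ i, (C (2*a) * X (Sum.inl i) * Ap i p + Ap i (C (2*a) * X (Sum.inl i) * p)))
  - Rp n * (∑ i, (C (2*b) * X (Sum.inr i) * Ap i p + Ap i (C (2*b) * X (Sum.inr i) * p)))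
  - (∑ i, (C (2*b) * X (Sum.inr i) * (C (2*a) * X (Sum.inl i) * p)
        + C (2*a) * X (Sum.inl i) * (C (2*b) * X (Sum.inr i) * p)))
  + Sp n * (C (2*(a-1)) * (C (2*a) * p))
  + Rp n * (C (2*(b-1)) * (C (2*b) * p))

lemma sumXX1 (c c' : ℂ) (p : MvPolynomial (Fin n ⊕ Fin n) ℂ) :
    ∑ i, C c * X (Sum.inl i) * (C c' * X (Sum.inl i) * p) = C c * (C c' * (Rp n * p)) := by
  calc ∑ i, C c * X (Sum.inl i) * (C c' * X (Sum.inl i) * p)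
      = ∑ i, (C c * C c' * p) * X (Sum.inl i) ^ 2 :=
        Finset.sum_congr rfl fun i _ => by ring
    _ = (C c * C c' * p) * ∑ i, X (Sum.inl i) ^ 2 := (Finset.mul_sum _ _ _).symm
    _ = C c * (C c' * (Rp n * p)) := by rw [Rp]; ring

lemma sumXX2 (c c' : ℂ) (p : MvPolynomial (Fin n ⊕ Fin n) ℂ) :
    ∑ i, C c * X (Sum.inr i) * (C c' * X (Sum.inr i) * p) = C c * (C c' * (Sp n * p)) := by
  calc ∑ i, C c * X (Sum.inr i) * (C c' * X (Sum.inr i) * p)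
      = ∑ i, (C c * C c' * p) * X (Sum.inr i) ^ 2 :=
        Finset.sum_congr rfl fun i _ => by ring
    _ = (C c * C c' * p) * ∑ i, X (Sum.inr i) ^ 2 := (Finset.mul_sum _ _ _).symm
    _ = C c * (C c' * (Sp n * p)) := by rw [Sp]; ring

lemma sum_psi (a b : ℂ) (p : MvPolynomial (Fin n ⊕ Fin n) ℂ) :
    ∑ i, psi a b i p = Rp n * Sp n * Phi a b p := by
  simp only [psi, Phi, Finset.sum_add_distrib, Finset.sum_sub_distrib, ← Finset.mul_sum,
    mul_add, mul_sub]
  rw [sumXX1, sumXX2]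
  ring

lemma Qop_FF (p : MvPolynomial (Fin n ⊕ Fin n) ℂ) (a b : ℂ) {ξ η : Fin n → ℝ}
    (hξ : ξ ≠ 0) (hη : η ≠ 0) :
    Qop (FF p a b) ξ η = FF (Phi a b p) (a-1) (b-1) ξ η := by
  rw [show Qop (FF p a b) ξ η = ∑ i, Dj i (Dj i (FF p a b)) ξ η from rfl,
    Finset.sum_congr rfl (fun i _ => DjDj_FF' p a b i hξ hη), FF_sum, sum_psi,
    show Rp n * Sp n * Phi a b p = Rp n * (Sp n * Phi a b p) from by ring,
    FF_lower1 hξ, FF_lower2 hη]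

end D

section E

lemma isHomog_cast {σ : Type*} {p : MvPolynomial σ ℂ} {m m' : ℕ} (h : p.IsHomogeneous m)
    (e : m = m') : p.IsHomogeneous m' := e ▸ h

lemma pderiv_isHomog {σ : Type*} [DecidableEq σ] {p : MvPolynomial σ ℂ} {d : ℕ}
    (h : p.IsHomogeneous d) (s : σ) : (pderiv s p).IsHomogeneous (d - 1) := by
  rw [p.as_sum, map_sum]
  apply IsHomogeneous.sum
  intro u hu
  rw [pderiv_monomial]
  by_cases h0 : u s = 0
  · rw [h0]
    simp only [Nat.cast_zero, mul_zero, map_zero]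
    exact isHomogeneous_zero _ _ _
  · apply isHomogeneous_monomial
    have hd : u.degree = d := by
      rw [Finsupp.degree_eq_weight_one]
      exact h (MvPolynomial.mem_support_iff.mp hu)
    have hle : Finsupp.single s 1 ≤ u :=
      Finsupp.single_le_iff.mpr (Nat.one_le_iff_ne_zero.mpr h0)
    have hadd : (u - Finsupp.single s 1) + Finsupp.single s 1 = u := tsub_add_cancel_of_le hle
    have h2 : (u - Finsupp.single s 1).degree + (Finsupp.single s 1).degree = u.degree := by
      simp only [Finsupp.degree_eq_weight_one]
      rw [← map_add, hadd]
    have h3 : (Finsupp.single s 1).degree = 1 := by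
      exact Finsupp.degree_single s 1
    omega

lemma pderiv_of_isHomog_zero {σ : Type*} [DecidableEq σ] {p : MvPolynomial σ ℂ}
    (h : p.IsHomogeneous 0) (s : σ) : pderiv s p = 0 := by
  rw [p.as_sum, map_sum]
  apply Finset.sum_eq_zero
  intro u hu
  have : u = 0 := by
    rw [← Finsupp.degree_eq_zero_iff, Finsupp.degree_eq_weight_one]
    exact h (MvPolynomial.mem_support_iff.mp hu)
  subst this
  simp [pderiv_monomial]

variable {n : ℕ}

lemma Ap_isHomog {p : MvPolynomial (Fin n ⊕ Fin n) ℂ} {d : ℕ} (h : p.IsHomogeneous d)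
    (i : Fin n) : (Ap i p).IsHomogeneous (d - 1) :=
  (pderiv_isHomog h _).sub (pderiv_isHomog h _)

lemma Ap_of_isHomog_zero {p : MvPolynomial (Fin n ⊕ Fin n) ℂ} (h : p.IsHomogeneous 0)
    (i : Fin n) : Ap i p = 0 := by
  rw [Ap, pderiv_of_isHomog_zero h, pderiv_of_isHomog_zero h, sub_zero]

lemma Rp_isHomog : (Rp n).IsHomogeneous 2 :=
  IsHomogeneous.sum _ _ _ (fun i _ => isHomogeneous_X_pow _ 2)

lemma Sp_isHomog : (Sp n).IsHomogeneous 2 :=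
  IsHomogeneous.sum _ _ _ (fun i _ => isHomogeneous_X_pow _ 2)

lemma ApAp_isHomog {p : MvPolynomial (Fin n ⊕ Fin n) ℂ} {d : ℕ} (h : p.IsHomogeneous d)
    (i : Fin n) : (Ap i (Ap i p)).IsHomogeneous (d - 2) := by
  have := Ap_isHomog (Ap_isHomog h i) i
  exact isHomog_cast this (by omega)

lemma CXAp_isHomog {p : MvPolynomial (Fin n ⊕ Fin n) ℂ} {d : ℕ} (h : p.IsHomogeneous d)
    (c : ℂ) (s : Fin n ⊕ Fin n) (i : Fin n) :
    (C c * X s * Ap i p).IsHomogeneous d := by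
  rcases d with _ | d
  · rw [Ap_of_isHomog_zero h, mul_zero]
    exact isHomogeneous_zero _ _ _
  · have : (C c * X s * Ap i p).IsHomogeneous ((0 + 1) + d) :=
      ((isHomogeneous_C _ _).mul (isHomogeneous_X _ _)).mul
        (isHomog_cast (Ap_isHomog h i) (by omega))
    exact isHomog_cast this (by omega)

lemma ApCX_isHomog {p : MvPolynomial (Fin n ⊕ Fin n) ℂ} {d : ℕ} (h : p.IsHomogeneous d)
    (c : ℂ) (s : Fin n ⊕ Fin n) (i : Fin n) :
    (Ap i (C c * X s * p)).IsHomogeneous d := by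
  have h1 : (C c * X s * p).IsHomogeneous (d + 1) := by
    have : (C c * X s * p).IsHomogeneous ((0 + 1) + d) :=
      ((isHomogeneous_C _ _).mul (isHomogeneous_X _ _)).mul h
    exact isHomog_cast this (by omega)
  exact isHomog_cast (Ap_isHomog h1 i) (by omega)

lemma Phi_isHomog {p : MvPolynomial (Fin n ⊕ Fin n) ℂ} {d : ℕ} (h : p.IsHomogeneous d)
    (a b : ℂ) : (Phi a b p).IsHomogeneous (d + 2) := by
  rw [Phi]
  apply IsHomogeneous.add
  apply IsHomogeneous.add
  apply IsHomogeneous.sub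
  apply IsHomogeneous.sub
  apply IsHomogeneous.add
  · -- Rp * Sp * ∑ ApAp
    rcases d with _ | _ | d
    · have : ∀ i : Fin n, Ap i (Ap i p) = 0 := fun i => by
        rw [Ap_of_isHomog_zero h i]
        simp [Ap]
      simp only [this, Finset.sum_const_zero, mul_zero]
      exact isHomogeneous_zero _ _ _
    · have : ∀ i : Fin n, Ap i (Ap i p) = 0 := fun i =>
        Ap_of_isHomog_zero (isHomog_cast (Ap_isHomog h i) (by omega)) i
      simp only [this, Finset.sum_const_zero, mul_zero]
      exact isHomogeneous_zero _ _ _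
    · have : (Rp n * Sp n * ∑ i, Ap i (Ap i p)).IsHomogeneous ((2 + 2) + d) :=
        (Rp_isHomog.mul Sp_isHomog).mul
          (IsHomogeneous.sum _ _ _ (fun i _ => isHomog_cast (ApAp_isHomog h i) (by omega)))
      exact isHomog_cast this (by omega)
  · have : (Sp n * ∑ i, (C (2*a) * X (Sum.inl i) * Ap i p
        + Ap i (C (2*a) * X (Sum.inl i) * p))).IsHomogeneous (2 + d) :=
      Sp_isHomog.mul (IsHomogeneous.sum _ _ _
        (fun i _ => (CXAp_isHomog h _ _ i).add (ApCX_isHomog h _ _ i)))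
    exact isHomog_cast this (by omega)
  · have : (Rp n * ∑ i, (C (2*b) * X (Sum.inr i) * Ap i p
        + Ap i (C (2*b) * X (Sum.inr i) * p))).IsHomogeneous (2 + d) :=
      Rp_isHomog.mul (IsHomogeneous.sum _ _ _
        (fun i _ => (CXAp_isHomog h _ _ i).add (ApCX_isHomog h _ _ i)))
    exact isHomog_cast this (by omega)
  · apply IsHomogeneous.sum
    intro i _
    have h1 : (C (2*b) * X (Sum.inr i) * (C (2*a) * X (Sum.inl i) * p)).IsHomogeneous
        ((0 + 1) + ((0 + 1) + d)) :=
      ((isHomogeneous_C _ _).mul (isHomogeneous_X _ _)).mul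
        (((isHomogeneous_C _ _).mul (isHomogeneous_X _ _)).mul h)
    have h2 : (C (2*a) * X (Sum.inl i) * (C (2*b) * X (Sum.inr i) * p)).IsHomogeneous
        ((0 + 1) + ((0 + 1) + d)) :=
      ((isHomogeneous_C _ _).mul (isHomogeneous_X _ _)).mul
        (((isHomogeneous_C _ _).mul (isHomogeneous_X _ _)).mul h)
    exact (isHomog_cast h1 (by omega)).add (isHomog_cast h2 (by omega))
  · have : (Sp n * (C (2*(a-1)) * (C (2*a) * p))).IsHomogeneous (2 + (0 + (0 + d))) :=
      Sp_isHomog.mul ((isHomogeneous_C _ _).mul ((isHomogeneous_C _ _).mul h))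
    exact isHomog_cast this (by omega)
  · have : (Rp n * (C (2*(b-1)) * (C (2*b) * p))).IsHomogeneous (2 + (0 + (0 + d))) :=
      Rp_isHomog.mul ((isHomogeneous_C _ _).mul ((isHomogeneous_C _ _).mul h))
    exact isHomog_cast this (by omega)

end E

section F
variable {n : ℕ}

/-- the iterated polynomials -/
noncomputable def PP (a b : ℂ) : ℕ → MvPolynomial (Fin n ⊕ Fin n) ℂ
  | 0 => 1
  | (j+1) => Phi (a - j) (b - j) (PP a b j)

lemma PP_isHomog (a b : ℂ) (j : ℕ) : (PP (n := n) a b j).IsHomogeneous (2 * j) := by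
  induction j with
  | zero => exact isHomog_cast (isHomogeneous_one _ _) (by omega)
  | succ j ih =>
      exact isHomog_cast (Phi_isHomog ih (a - j) (b - j)) (by omega)

lemma iter_FF (a b : ℂ) (j : ℕ) : ∀ ξ η : Fin n → ℝ, ξ ≠ 0 → η ≠ 0 →
    (Qop^[j] (FF (1 : MvPolynomial (Fin n ⊕ Fin n) ℂ) a b)) ξ η
      = FF (PP a b j) (a - j) (b - j) ξ η := by
  induction j with
  | zero =>
      intro ξ η _ _
      simp [PP]
  | succ j ih =>
      intro ξ η hξ hη
      rw [Function.iterate_succ_apply', Qop_congr (fun ξ' η' h1 h2 => ih ξ' η' h1 h2) hξ hη,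
        Qop_FF _ _ _ hξ hη, show PP (n := n) a b (j+1) = Phi (a - j) (b - j) (PP a b j) from rfl]
      exact FF_exp_congr _ (by push_cast; ring) (by push_cast; ring) ξ η

end F

theorem stmt14 (n : ℕ) (α β : ℂ) (k : ℕ) :
    ∃ p : MvPolynomial (Fin n ⊕ Fin n) ℂ,
      p.IsHomogeneous (2 * k) ∧ (k = 0 → p = 1) ∧
      ∀ ξ η : Fin n → ℝ, ξ ≠ 0 → η ≠ 0 →
        (Qop^[k] (fun u v =>
            ((∑ j, u j ^ 2 : ℝ) : ℂ) ^ (α + k) * ((∑ j, v j ^ 2 : ℝ) : ℂ) ^ (β + k))) ξ η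
          = MvPolynomial.eval (Sum.elim (fun j => (ξ j : ℂ)) (fun j => (η j : ℂ))) p *
              ((∑ j, ξ j ^ 2 : ℝ) : ℂ) ^ α * ((∑ j, η j ^ 2 : ℝ) : ℂ) ^ β := by
  refine ⟨PP (α + k) (β + k) k, PP_isHomog _ _ _, ?_, ?_⟩
  · rintro rfl; rfl
  · intro ξ η hξ hη
    have hfun : (fun u v => ((∑ j, u j ^ 2 : ℝ) : ℂ) ^ (α + k) * ((∑ j, v j ^ 2 : ℝ) : ℂ) ^ (β + k))
        = FF (n := n) 1 (α + k) (β + k) := by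
      funext u v
      simp [FF, ev, Rsq]
    rw [hfun, iter_FF _ _ k ξ η hξ hη,
      FF_exp_congr _ (show α + k - k = α by ring) (show β + k - k = β by ring) ξ η]
    rfl
end Aux
end

section
/- Let q_k^{α,β} be defined by (∂/∂ξ - ∂/∂ζ)^k(ξ^{α+k}ζ^{β+k}) = ξ^α ζ^β q_k^{α,β}(ξ,ζ), and define the Rankin–Cohen-type symbols b_{λ,μ}^{(k)} recursively by b^{(0)}_{λ,μ} = 1 and b_{λ,μ}^{(k)} = i[(−μξ + λζ) b_{λ+1,μ+1}^{(k-1)} + ξζ(∂/∂ξ − ∂/∂ζ) b_{λ+1,μ+1}^{(k-1)}]. Then b_{λ,μ}^{(k)}(ξ,ζ) = q_k^{λ−1,μ−1}(iξ, iζ) = i^k q_k^{λ−1,μ−1}(ξ,ζ). -/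
open MvPolynomial Complex

/-- funext on the positive quadrant -/
theorem aux_funext (p₁ p₂ : MvPolynomial (Fin 2) ℂ)
    (h : ∀ x y : ℝ, 0 < x → 0 < y →
      eval ![(x:ℂ), (y:ℂ)] p₁ = eval ![(x:ℂ), (y:ℂ)] p₂) : p₁ = p₂ := by
  -- first freeze first variable at a positive real, get equality for all second args
  have key : ∀ x : ℝ, 0 < x → ∀ ζ : ℂ, eval ![(x:ℂ), ζ] p₁ = eval ![(x:ℂ), ζ] p₂ := by
    intro x hx ζ
    have h2 : ∀ (p : MvPolynomial (Fin 2) ℂ) (t : ℂ),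
        Polynomial.eval t (MvPolynomial.aeval ![Polynomial.C (x:ℂ), Polynomial.X] p)
          = eval ![(x:ℂ), t] p := by
      intro p t
      have := congrFun (congrArg (·.toFun)
        (MvPolynomial.comp_aeval (f := ![Polynomial.C (x:ℂ), Polynomial.X])
          (Polynomial.aeval t : Polynomial ℂ →ₐ[ℂ] ℂ))) p
      simp only [AlgHom.toFun_eq_coe, AlgHom.coe_comp, Function.comp_apply] at this
      rw [← Polynomial.coe_aeval_eq_eval, this]
      have hg : (fun i => (Polynomial.aeval t) (![Polynomial.C (x:ℂ), Polynomial.X] i))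
          = ![(x:ℂ), t] := by funext i; fin_cases i <;> simp
      rw [hg, MvPolynomial.aeval_def, ← MvPolynomial.eval₂_id]
      rfl
    have := Polynomial.eq_of_infinite_eval_eq
      (MvPolynomial.aeval ![Polynomial.C (x:ℂ), Polynomial.X] p₁)
      (MvPolynomial.aeval ![Polynomial.C (x:ℂ), Polynomial.X] p₂) ?_
    · rw [← h2, ← h2, this]
    · apply Set.Infinite.mono (s := (fun y : ℝ => (y:ℂ)) '' Set.Ioi 0)
      · rintro t ⟨y, hy, rfl⟩
        simp only [Set.mem_setOf_eq, h2]
        exact h x y hx hy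
      · exact (Set.Ioi_infinite 0).image (fun a _ b _ hab => Complex.ofReal_inj.mp hab)
  have key2 : ∀ (ζ ξ : ℂ), eval ![ξ, ζ] p₁ = eval ![ξ, ζ] p₂ := by
    intro ζ ξ
    have h2 : ∀ (p : MvPolynomial (Fin 2) ℂ) (t : ℂ),
        Polynomial.eval t (MvPolynomial.aeval ![Polynomial.X, Polynomial.C ζ] p)
          = eval ![t, ζ] p := by
      intro p t
      have := congrFun (congrArg (·.toFun)
        (MvPolynomial.comp_aeval (f := ![Polynomial.X, Polynomial.C ζ])
          (Polynomial.aeval t : Polynomial ℂ →ₐ[ℂ] ℂ))) p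
      simp only [AlgHom.toFun_eq_coe, AlgHom.coe_comp, Function.comp_apply] at this
      rw [← Polynomial.coe_aeval_eq_eval, this]
      have hg : (fun i => (Polynomial.aeval t) (![Polynomial.X, Polynomial.C ζ] i))
          = ![t, ζ] := by funext i; fin_cases i <;> simp
      rw [hg, MvPolynomial.aeval_def, ← MvPolynomial.eval₂_id]
      rfl
    have := Polynomial.eq_of_infinite_eval_eq
      (MvPolynomial.aeval ![Polynomial.X, Polynomial.C ζ] p₁)
      (MvPolynomial.aeval ![Polynomial.X, Polynomial.C ζ] p₂) ?_
    · rw [← h2, ← h2, this]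
    · apply Set.Infinite.mono (s := (fun y : ℝ => (y:ℂ)) '' Set.Ioi 0)
      · rintro t ⟨y, hy, rfl⟩
        simp only [Set.mem_setOf_eq, h2]
        exact key y hy ζ
      · exact (Set.Ioi_infinite 0).image (fun a _ b _ hab => Complex.ofReal_inj.mp hab)
  apply MvPolynomial.funext
  intro v
  have hv : ![v 0, v 1] = v := by funext i; fin_cases i <;> rfl
  rw [← hv]
  exact key2 (v 1) (v 0)

theorem aux_deriv0 (p : MvPolynomial (Fin 2) ℂ) (x y : ℂ) :
    HasDerivAt (fun u : ℂ => eval ![u, y] p) (eval ![x, y] (pderiv 0 p)) x := by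
  induction p using MvPolynomial.induction_on with
  | C a => simpa using hasDerivAt_const x a
  | add p₁ p₂ h1 h2 =>
    have h3 : HasDerivAt (fun u : ℂ => eval ![u, y] p₁ + eval ![u, y] p₂)
        (eval ![x, y] (pderiv 0 p₁) + eval ![x, y] (pderiv 0 p₂)) x := h1.add h2
    simpa using h3
  | mul_X p n ih =>
    fin_cases n
    · have this : HasDerivAt (fun u : ℂ => eval ![u, y] p * u)
          (eval ![x, y] (pderiv 0 p) * x + eval ![x, y] p * 1) x := ih.mul (hasDerivAt_id x)
      convert this using 1
      · funext u; simp
      · simp [pderiv_mul, Pi.single_apply]; ring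
    · have this : HasDerivAt (fun u : ℂ => eval ![u, y] p * y)
          (eval ![x, y] (pderiv 0 p) * y) x := ih.mul_const y
      convert this using 1
      · funext u; simp
      · simp [pderiv_mul, Pi.single_apply]; ring

theorem aux_deriv1 (p : MvPolynomial (Fin 2) ℂ) (x y : ℂ) :
    HasDerivAt (fun v : ℂ => eval ![x, v] p) (eval ![x, y] (pderiv 1 p)) y := by
  induction p using MvPolynomial.induction_on with
  | C a => simpa using hasDerivAt_const y a
  | add p₁ p₂ h1 h2 =>
    have h3 : HasDerivAt (fun v : ℂ => eval ![x, v] p₁ + eval ![x, v] p₂)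
        (eval ![x, y] (pderiv 1 p₁) + eval ![x, y] (pderiv 1 p₂)) y := h1.add h2
    simpa using h3
  | mul_X p n ih =>
    fin_cases n
    · have this : HasDerivAt (fun v : ℂ => eval ![x, v] p * x)
          (eval ![x, y] (pderiv 1 p) * x) y := ih.mul_const x
      convert this using 1
      · funext u; simp
      · simp [pderiv_mul, Pi.single_apply]; ring
    · have this : HasDerivAt (fun v : ℂ => eval ![x, v] p * v)
          (eval ![x, y] (pderiv 1 p) * y + eval ![x, y] p * 1) y := ih.mul (hasDerivAt_id y)
      convert this using 1
      · funext u; simp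
      · simp [pderiv_mul, Pi.single_apply]; ring

theorem aux_homog {p : MvPolynomial (Fin 2) ℂ} {n : ℕ} (hp : p.IsHomogeneous n)
    (c : ℂ) (v : Fin 2 → ℂ) : eval (fun i => c * v i) p = c ^ n * eval v p := by
  rw [eval_eq', eval_eq', Finset.mul_sum]
  apply Finset.sum_congr rfl
  intro d hd
  have hdeg : ∑ i : Fin 2, d i = n := by
    have h1 := hp (MvPolynomial.mem_support_iff.mp hd)
    rw [← h1]
    rw [Finsupp.weight_apply]
    rw [Finsupp.sum_fintype]
    · simp
    · intro i; simp
  rw [show ∏ i : Fin 2, (c * v i) ^ d i = (∏ i : Fin 2, c ^ d i) * ∏ i : Fin 2, v i ^ d i by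
    rw [← Finset.prod_mul_distrib]; exact Finset.prod_congr rfl fun i _ => mul_pow _ _ _]
  rw [Finset.prod_pow_eq_pow_sum]
  rw [hdeg]
  ring

theorem stmt18 (q : ℂ → ℂ → ℕ → MvPolynomial (Fin 2) ℂ)
    (hqhom : ∀ (α β : ℂ) (k : ℕ), (q α β k).IsHomogeneous k)
    -- `q α β k = q_k^{α,β}` defined by the Rodrigues-type formula
    (hq : ∀ (α β : ℂ) (k : ℕ) (x y : ℝ), 0 < x → 0 < y →
      (Dop^[k] (fun ξ ζ => (ξ : ℂ) ^ (α + k) * (ζ : ℂ) ^ (β + k))) x y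
        = (x : ℂ) ^ α * (y : ℂ) ^ β * MvPolynomial.eval ![(x : ℂ), (y : ℂ)] (q α β k))
    (b : ℂ → ℂ → ℕ → MvPolynomial (Fin 2) ℂ)
    (hb0 : ∀ lam mu : ℂ, b lam mu 0 = 1)
    -- the Rankin–Cohen recursion for the symbols
    (hbrec : ∀ (lam mu : ℂ) (k : ℕ),
      b lam mu (k + 1)
        = C Complex.I *
            ((C (-mu) * X 0 + C lam * X 1) * b (lam + 1) (mu + 1) k
              + X 0 * X 1 *
                  (pderiv 0 (b (lam + 1) (mu + 1) k) - pderiv 1 (b (lam + 1) (mu + 1) k)))) :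
    ∀ (lam mu : ℂ) (k : ℕ) (ξ ζ : ℂ),
      MvPolynomial.eval ![ξ, ζ] (b lam mu k)
          = MvPolynomial.eval ![Complex.I * ξ, Complex.I * ζ] (q (lam - 1) (mu - 1) k)
        ∧ MvPolynomial.eval ![Complex.I * ξ, Complex.I * ζ] (q (lam - 1) (mu - 1) k)
          = Complex.I ^ k * MvPolynomial.eval ![ξ, ζ] (q (lam - 1) (mu - 1) k) := by
  -- q at level 0 is the constant polynomial 1
  have hq0 : ∀ α β : ℂ, q α β 0 = 1 := by
    intro α β
    apply aux_funext
    intro x y hx hy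
    have hx0 : (x:ℂ) ≠ 0 := by exact_mod_cast hx.ne'
    have hy0 : (y:ℂ) ≠ 0 := by exact_mod_cast hy.ne'
    have hxa : (x:ℂ) ^ α ≠ 0 := by
      simp [Complex.cpow_eq_zero_iff, hx0]
    have hyb : (y:ℂ) ^ β ≠ 0 := by
      simp [Complex.cpow_eq_zero_iff, hy0]
    have h := hq α β 0 x y hx hy
    simp only [Function.iterate_zero, id_eq, Nat.cast_zero, add_zero] at h
    simp only [map_one]
    apply mul_left_cancel₀ (mul_ne_zero hxa hyb)
    rw [mul_one]
    exact h.symm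
  -- the recursion satisfied by q
  have hqrec : ∀ (α β : ℂ) (k : ℕ),
      q α β (k+1)
        = (C (α+1) * X 1 - C (β+1) * X 0) * q (α+1) (β+1) k
          + X 0 * X 1 * (pderiv 0 (q (α+1) (β+1) k) - pderiv 1 (q (α+1) (β+1) k)) := by
    intro α β k
    apply aux_funext
    intro x y hx hy
    have hx0 : (x:ℂ) ≠ 0 := by exact_mod_cast hx.ne'
    have hy0 : (y:ℂ) ≠ 0 := by exact_mod_cast hy.ne'
    have hxa : (x:ℂ) ^ α ≠ 0 := by simp [Complex.cpow_eq_zero_iff, hx0]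
    have hyb : (y:ℂ) ^ β ≠ 0 := by simp [Complex.cpow_eq_zero_iff, hy0]
    set Q := q (α+1) (β+1) k with hQ
    have hmain := hq α β (k+1) x y hx hy
    have hfun : (fun ξ ζ : ℝ => (ξ:ℂ) ^ (α + ((k+1:ℕ):ℂ)) * (ζ:ℂ) ^ (β + ((k+1:ℕ):ℂ)))
        = (fun ξ ζ : ℝ => (ξ:ℂ) ^ ((α+1) + (k:ℂ)) * (ζ:ℂ) ^ ((β+1) + (k:ℂ))) := by
      funext ξ ζ
      rw [show α + ((k+1:ℕ):ℂ) = (α+1) + (k:ℂ) by push_cast; ring,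
        show β + ((k+1:ℕ):ℂ) = (β+1) + (k:ℂ) by push_cast; ring]
    rw [Function.iterate_succ_apply', hfun] at hmain
    have hev : ∀ u v : ℝ, 0 < u → 0 < v →
        (Dop^[k] (fun ξ ζ : ℝ => (ξ:ℂ) ^ ((α+1) + (k:ℂ)) * (ζ:ℂ) ^ ((β+1) + (k:ℂ)))) u v
          = (u:ℂ) ^ (α+1) * (v:ℂ) ^ (β+1) * eval ![(u:ℂ), (v:ℂ)] Q := hq (α+1) (β+1) k
    -- compute the two derivatives
    have hD1 : deriv (fun u : ℝ =>
        (Dop^[k] (fun ξ ζ : ℝ => (ξ:ℂ) ^ ((α+1) + (k:ℂ)) * (ζ:ℂ) ^ ((β+1) + (k:ℂ)))) u y) x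
          = ((α+1) * (x:ℂ) ^ α * (y:ℂ) ^ (β+1)) * eval ![(x:ℂ), (y:ℂ)] Q
            + ((x:ℂ) ^ (α+1) * (y:ℂ) ^ (β+1)) * eval ![(x:ℂ), (y:ℂ)] (pderiv 0 Q) := by
      have hcong : (fun u : ℝ =>
          (Dop^[k] (fun ξ ζ : ℝ => (ξ:ℂ) ^ ((α+1) + (k:ℂ)) * (ζ:ℂ) ^ ((β+1) + (k:ℂ)))) u y)
            =ᶠ[nhds x] fun u : ℝ => (u:ℂ) ^ (α+1) * (y:ℂ) ^ (β+1) * eval ![(u:ℂ), (y:ℂ)] Q := by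
        filter_upwards [Ioi_mem_nhds hx] with u hu
        exact hev u y hu hy
      rw [hcong.deriv_eq]
      have hA : HasDerivAt (fun u : ℝ => ((u:ℂ)) ^ (α+1)) ((α+1) * (x:ℂ) ^ α) x := by
        have h1 : HasDerivAt (fun z : ℂ => z ^ (α+1)) ((α+1) * (x:ℂ) ^ α) (x:ℂ) := by
          have := (hasDerivAt_id ((x:ℂ))).cpow_const
            (c := α+1) (by simp [Complex.mem_slitPlane_iff, hx])
          simpa [add_sub_cancel_right] using this
        exact h1.comp_ofReal
      have hB : HasDerivAt (fun u : ℝ => eval ![(u:ℂ), (y:ℂ)] Q)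
          (eval ![(x:ℂ), (y:ℂ)] (pderiv 0 Q)) x := (aux_deriv0 Q x y).comp_ofReal
      exact ((hA.mul_const ((y:ℂ) ^ (β+1))).mul hB).deriv
    have hD2 : deriv (fun v : ℝ =>
        (Dop^[k] (fun ξ ζ : ℝ => (ξ:ℂ) ^ ((α+1) + (k:ℂ)) * (ζ:ℂ) ^ ((β+1) + (k:ℂ)))) x v) y
          = ((x:ℂ) ^ (α+1) * ((β+1) * (y:ℂ) ^ β)) * eval ![(x:ℂ), (y:ℂ)] Q
            + ((x:ℂ) ^ (α+1) * (y:ℂ) ^ (β+1)) * eval ![(x:ℂ), (y:ℂ)] (pderiv 1 Q) := by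
      have hcong : (fun v : ℝ =>
          (Dop^[k] (fun ξ ζ : ℝ => (ξ:ℂ) ^ ((α+1) + (k:ℂ)) * (ζ:ℂ) ^ ((β+1) + (k:ℂ)))) x v)
            =ᶠ[nhds y] fun v : ℝ => (x:ℂ) ^ (α+1) * (v:ℂ) ^ (β+1) * eval ![(x:ℂ), (v:ℂ)] Q := by
        filter_upwards [Ioi_mem_nhds hy] with v hv
        exact hev x v hx hv
      rw [hcong.deriv_eq]
      have hA : HasDerivAt (fun v : ℝ => ((v:ℂ)) ^ (β+1)) ((β+1) * (y:ℂ) ^ β) y := by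
        have h1 : HasDerivAt (fun z : ℂ => z ^ (β+1)) ((β+1) * (y:ℂ) ^ β) (y:ℂ) := by
          have := (hasDerivAt_id ((y:ℂ))).cpow_const
            (c := β+1) (by simp [Complex.mem_slitPlane_iff, hy])
          simpa [add_sub_cancel_right] using this
        exact h1.comp_ofReal
      have hB : HasDerivAt (fun v : ℝ => eval ![(x:ℂ), (v:ℂ)] Q)
          (eval ![(x:ℂ), (y:ℂ)] (pderiv 1 Q)) y := (aux_deriv1 Q x y).comp_ofReal
      exact ((hA.const_mul ((x:ℂ) ^ (α+1))).mul hB).deriv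
    rw [show Dop (Dop^[k] (fun ξ ζ : ℝ => (ξ:ℂ) ^ ((α+1) + (k:ℂ)) * (ζ:ℂ) ^ ((β+1) + (k:ℂ)))) x y
        = _ - _ from rfl, hD1, hD2] at hmain
    -- cancel x^α y^β
    apply mul_left_cancel₀ (mul_ne_zero hxa hyb)
    have hxsplit : (x:ℂ) ^ (α+1) = (x:ℂ) ^ α * (x:ℂ) := by
      rw [Complex.cpow_add _ _ hx0, Complex.cpow_one]
    have hysplit : (y:ℂ) ^ (β+1) = (y:ℂ) ^ β * (y:ℂ) := by
      rw [Complex.cpow_add _ _ hy0, Complex.cpow_one]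
    rw [← hmain, hxsplit, hysplit]
    simp only [eval_add, eval_sub, eval_mul, eval_C, eval_X, Matrix.cons_val_zero,
      Matrix.cons_val_one, Matrix.head_cons]
    ring
  -- the key polynomial identity
  have key : ∀ (k : ℕ) (lam mu : ℂ),
      b lam mu k = C (Complex.I ^ k) * q (lam - 1) (mu - 1) k := by
    intro k
    induction k with
    | zero => intro lam mu; rw [hb0, hq0]; simp
    | succ k ih =>
      intro lam mu
      have ih' : b (lam + 1) (mu + 1) k = C (Complex.I ^ k) * q lam mu k := by
        rw [ih (lam+1) (mu+1)]
        simp [add_sub_cancel_right]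
      rw [hbrec, ih', hqrec (lam-1) (mu-1) k]
      rw [show lam - 1 + 1 = lam by ring, show mu - 1 + 1 = mu by ring]
      simp only [pderiv_C_mul]
      simp only [map_neg, pow_succ, map_mul]
      ring
  intro lam mu k ξ ζ
  have h2 : eval ![Complex.I * ξ, Complex.I * ζ] (q (lam - 1) (mu - 1) k)
      = Complex.I ^ k * eval ![ξ, ζ] (q (lam - 1) (mu - 1) k) := by
    have := aux_homog (hqhom (lam - 1) (mu - 1) k) Complex.I ![ξ, ζ]
    rw [show (fun i => Complex.I * ![ξ, ζ] i) = ![Complex.I * ξ, Complex.I * ζ] by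
      funext i; fin_cases i <;> simp] at this
    exact this
  refine ⟨?_, h2⟩
  rw [key k lam mu, h2]
  simp
end
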